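/- arXiv:2604.15915 — 6 statements merged into one kernel-verified Lean document; each statement's English description precedes it below -/
import Mathlib

section
/- Let q ≥ 4 be a power of a prime p. Let S² be the set of pairs (g₁,g₂) ∈ 𝔽_q[T]² with g₂ ≠ 0 such that T ∤ gᵢ for i = 1, 2, and such that there exists a monic irreducible polynomial 𝔩 ∈ 𝔽_q[T], 𝔩 ≠ T, with ν_𝔩(g₁) = 0 and p ∤ ν_𝔩(g₂). Then the density 𝔡(S²) exists and equals (1 − 1/q)². -/
open Polynomial UniqueFactorizationMonoid
variable {K : Type} [Field K]

lemma decomp (p : ℕ) (hp : p ≠ 0) (g1 g2 : K[X]) (h1 : ¬ X ∣ g1) (h2 : ¬ X ∣ g2)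
    (hbad : ∀ l : K[X], l.Monic → Irreducible l → l ≠ X → ¬ l ∣ g1 →
      ∀ k : ℕ, l ^ k ∣ g2 → ¬ l ^ (k+1) ∣ g2 → p ∣ k) :
    ∃ c : K, ∃ u v b h : K[X], c ≠ 0 ∧ u.Monic ∧ v.Monic ∧ b.Monic ∧
      g1 = u * h ∧ g2 = C c * (u * (v ^ 2 * b ^ p)) := by
  classical
  have hg2 : g2 ≠ 0 := fun h => h2 (h ▸ dvd_zero X)
  set s := normalizedFactors g2 with hs
  have hmem : ∀ l ∈ s, Prime l ∧ l.Monic ∧ l ≠ X ∧ normalize l = l := by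
    intro l hl
    have hprime := prime_of_normalized_factor l hl
    have hnorm := normalize_normalized_factor l hl
    have hmon : l.Monic := by
      have := Polynomial.monic_normalize (p := l) hprime.ne_zero
      rwa [hnorm] at this
    refine ⟨hprime, hmon, ?_, hnorm⟩
    intro hX
    exact h2 (hX ▸ dvd_of_mem_normalizedFactors hl)
  have hassoc : Associated s.prod g2 := prod_normalizedFactors hg2
  have hd : s.prod ∣ g2 := hassoc.dvd
  obtain ⟨w, hw⟩ := hassoc
  obtain ⟨c, hcu, hc⟩ := Polynomial.isUnit_iff.mp w.isUnit
  have hc0 : c ≠ 0 := hcu.ne_zero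
  set t1 := s.filter (· ∣ g1) with ht1
  set t2 := s.filter (fun l => ¬ l ∣ g1) with ht2def
  have hsplit : t1 + t2 = s := Multiset.filter_add_not _ s
  -- each count in t2 divisible by p
  have hcnt : ∀ l ∈ t2, p ∣ t2.count l := by
    intro l hl
    rw [Multiset.mem_filter] at hl
    obtain ⟨hls, hlg1⟩ := hl
    obtain ⟨hprime, hmon, hlX, hnorm⟩ := hmem l hls
    have hcount : t2.count l = s.count l := by
      rw [ht2def, Multiset.count_filter, if_pos hlg1]
    rw [hcount]
    set k := s.count l with hk
    have hdvd1 : l ^ k ∣ g2 := by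
      have hrep : Multiset.replicate k l ≤ s := Multiset.le_count_iff_replicate_le.mp le_rfl
      have := Multiset.prod_dvd_prod_of_le hrep
      rw [Multiset.prod_replicate] at this
      exact this.trans hd
    have hdvd2 : ¬ l ^ (k+1) ∣ g2 := by
      intro hdvd
      have hle := (dvd_iff_normalizedFactors_le_normalizedFactors
        (pow_ne_zero _ hprime.ne_zero) hg2).mp hdvd
      rw [normalizedFactors_pow, normalizedFactors_irreducible hprime.irreducible, hnorm] at hle
      have hle' : Multiset.replicate (k+1) l ≤ s := by
        rw [Multiset.replicate_succ]
        simpa [Multiset.nsmul_singleton] using hle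
      have := Multiset.le_count_iff_replicate_le.mpr hle'
      omega
    exact hbad l hmon hprime.irreducible hlX hlg1 k hdvd1 hdvd2
  obtain ⟨t2', ht2'⟩ := Multiset.exists_smul_of_dvd_count t2 hcnt
  set b := t2'.prod with hb
  have hbmon : b.Monic := by
    have := monic_multiset_prod_of_monic t2' id (fun l hl => ?_)
    · simpa using this
    · have : l ∈ t2 := by rw [ht2']; exact (Multiset.mem_nsmul).mpr ⟨hp, hl⟩
      exact (hmem l (Multiset.mem_filter.mp this).1).2.1
  have ht2prod : t2.prod = b ^ p := by rw [ht2', Multiset.prod_nsmul]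
  -- t1 decomposition
  set F := t1.toFinset with hF
  have hmemF : ∀ l ∈ F, l ∈ s ∧ l ∣ g1 := by
    intro l hl
    rw [hF, Multiset.mem_toFinset, ht1, Multiset.mem_filter] at hl
    exact hl
  set u := ∏ l ∈ F, l ^ (t1.count l % 2) with hu
  set v := ∏ l ∈ F, l ^ (t1.count l / 2) with hv
  have ht1prod : t1.prod = u * v ^ 2 := by
    rw [Finset.prod_multiset_count, hu, hv, ← Finset.prod_pow, ← Finset.prod_mul_distrib]
    refine Finset.prod_congr rfl (fun l hl => ?_)
    rw [← pow_mul, ← pow_add]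
    congr 1
    omega
  have humon : u.Monic := by
    refine monic_prod_of_monic _ _ (fun l hl => ?_)
    exact ((hmem l (hmemF l hl).1).2.1).pow _
  have hvmon : v.Monic := by
    refine monic_prod_of_monic _ _ (fun l hl => ?_)
    exact ((hmem l (hmemF l hl).1).2.1).pow _
  have hudvd : u ∣ g1 := by
    refine Finset.prod_dvd_of_coprime ?_ (fun l hl => ?_)
    · intro l hl l' hl' hne
      obtain ⟨hls, _⟩ := hmemF l hl
      obtain ⟨hls', _⟩ := hmemF l' hl'
      have hirr := (hmem l hls).1.irreducible
      have hirr' := (hmem l' hls').1.irreducible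
      have hnd : ¬ l ∣ l' := by
        intro hdvd
        have hassoc' := hirr.associated_of_dvd hirr' hdvd
        have := normalize_eq_normalize hassoc'.dvd hassoc'.symm.dvd
        rw [(hmem l hls).2.2.2, (hmem l' hls').2.2.2] at this
        exact hne this
      exact (IsCoprime.pow (hirr.coprime_iff_not_dvd.mpr hnd))
    · rcases Nat.mod_two_eq_zero_or_one (t1.count l) with h | h
      · rw [h, pow_zero]; exact one_dvd _
      · rw [h, pow_one]; exact (hmemF l hl).2
  obtain ⟨h, hh⟩ := hudvd
  refine ⟨c, u, v, b, h, hc0, humon, hvmon, hbmon, hh, ?_⟩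
  have : g2 = C c * s.prod := by rw [← hw, ← hc]; ring
  rw [this, ← hsplit, Multiset.prod_add, ht1prod, ht2prod]
  ring

noncomputable def Recon (p N M : ℕ)
    (t : (Fin N × Fin N) × K × {w : K[X] // w.degree < (N : WithBot ℕ)} ×
      {z : K[X] // z.degree < (M : WithBot ℕ)}) : K[X] × K[X] :=
  ((X ^ (t.1.1 : ℕ) + t.2.2.1.1 /ₘ X ^ (N - (t.1.1 : ℕ))) *
      (t.2.2.1.1 %ₘ X ^ (N - (t.1.1 : ℕ))),
    C t.2.1 * ((X ^ (t.1.1 : ℕ) + t.2.2.1.1 /ₘ X ^ (N - (t.1.1 : ℕ))) *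
      ((X ^ (t.1.2 : ℕ) + t.2.2.2.1 /ₘ X ^ (M - (t.1.2 : ℕ))) ^ 2 *
        (t.2.2.2.1 %ₘ X ^ (M - (t.1.2 : ℕ))) ^ p)))

lemma divmod_recover (a h : K[X]) (m : ℕ) (hh : h.degree < (m : WithBot ℕ)) :
    (a * X ^ m + h) /ₘ X ^ m = a ∧ (a * X ^ m + h) %ₘ X ^ m = h := by
  refine Polynomial.div_modByMonic_unique a h (monic_X_pow m) ⟨by ring, ?_⟩
  rwa [degree_X_pow]

-- encoding of a (monic, degree i) + (remainder of degree < L - i) pair into one poly of degree < L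
lemma encode_spec (u h : K[X]) (L : ℕ) (hu : u.Monic) (hiL : u.natDegree < L)
    (hh : h.degree < ((L - u.natDegree : ℕ) : WithBot ℕ)) :
    ∃ w : K[X], w.degree < (L : WithBot ℕ) ∧
      w /ₘ X ^ (L - u.natDegree) = u - X ^ u.natDegree ∧
      w %ₘ X ^ (L - u.natDegree) = h := by
  set i := u.natDegree
  refine ⟨(u - X ^ i) * X ^ (L - i) + h, ?_, divmod_recover _ _ _ hh⟩
  have hdu : u.degree = (i : WithBot ℕ) := degree_eq_natDegree hu.ne_zero
  have hd : (u - X ^ i).degree < (i : WithBot ℕ) := by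
    have := Polynomial.degree_sub_lt (by rw [degree_X_pow, hdu]) hu.ne_zero
      (by rw [hu.leadingCoeff, leadingCoeff_X_pow])
    rwa [hdu] at this
  have h1 : ((u - X ^ i) * X ^ (L - i)).degree < (L : WithBot ℕ) := by
    calc ((u - X ^ i) * X ^ (L - i)).degree
        ≤ (u - X ^ i).degree + ((L - i : ℕ) : WithBot ℕ) := by
          simpa [degree_X_pow] using degree_mul_le (u - X ^ i) (X ^ (L - i))
      _ < (i : WithBot ℕ) + ((L - i : ℕ) : WithBot ℕ) := by
          apply WithBot.add_lt_add_right (by simp) hd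
      _ = (L : WithBot ℕ) := by
          rw [← Nat.cast_add]; congr 1; omega
  refine lt_of_le_of_lt (degree_add_le _ _) (max_lt h1 (lt_of_lt_of_le hh ?_))
  exact_mod_cast WithBot.coe_le_coe.mpr (by omega : L - i ≤ L)

lemma bad_spec (p : ℕ) (hp2 : 2 ≤ p) (N : ℕ) (g1 g2 : K[X])
    (h1 : ¬ X ∣ g1) (h2 : ¬ X ∣ g2)
    (hd1 : g1.degree < (N : WithBot ℕ)) (hd2 : g2.degree < (N : WithBot ℕ))
    (hbad : ¬ ∃ l : K[X], l.Monic ∧ Irreducible l ∧ l ≠ X ∧ ¬ l ∣ g1 ∧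
      ∃ k : ℕ, ¬ p ∣ k ∧ l ^ k ∣ g2 ∧ ¬ l ^ (k + 1) ∣ g2) :
    ∃ t, Recon (K := K) p N (N / 2 + 1) t = (g1, g2) := by
  push_neg at hbad
  obtain ⟨c, u, v, b, h, hc0, humon, hvmon, hbmon, hh, hg2⟩ :=
    decomp p (by omega) g1 g2 h1 h2 (by
      intro l hm hi hX hndvd k hk hk1
      by_contra hpk
      exact hk1 (hbad l hm hi hX hndvd k hpk hk))
  have hg1ne : g1 ≠ 0 := fun hz => h1 (hz ▸ dvd_zero X)
  have hg2ne : g2 ≠ 0 := fun hz => h2 (hz ▸ dvd_zero X)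
  have hn1 : g1.natDegree < N := (natDegree_lt_iff_degree_lt hg1ne).mpr hd1
  have hn2 : g2.natDegree < N := (natDegree_lt_iff_degree_lt hg2ne).mpr hd2
  have hhne : h ≠ 0 := fun hz => hg1ne (by rw [hh, hz, mul_zero])
  have hdeg1 : g1.natDegree = u.natDegree + h.natDegree := by
    rw [hh, natDegree_mul humon.ne_zero hhne]
  have hdeg2 : g2.natDegree = u.natDegree + (2 * v.natDegree + p * b.natDegree) := by
    rw [hg2, natDegree_mul (C_ne_zero.mpr hc0)
        (mul_ne_zero humon.ne_zero (mul_ne_zero (pow_ne_zero _ hvmon.ne_zero)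
          (pow_ne_zero _ hbmon.ne_zero))),
      natDegree_mul humon.ne_zero
        (mul_ne_zero (pow_ne_zero _ hvmon.ne_zero) (pow_ne_zero _ hbmon.ne_zero)),
      natDegree_mul (pow_ne_zero _ hvmon.ne_zero) (pow_ne_zero _ hbmon.ne_zero),
      natDegree_pow, natDegree_pow, natDegree_C]
    ring
  have hpd : 2 * b.natDegree ≤ p * b.natDegree := Nat.mul_le_mul_right _ hp2
  set i := u.natDegree with hi
  set j := v.natDegree with hj
  set M := N / 2 + 1 with hM
  have hiN : i < N := by omega
  have hjM : j < M := by omega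
  have hjN : j < N := by omega
  have hbM : b.natDegree ≤ M - 1 - j := by omega
  obtain ⟨w, hwdeg, hwdiv, hwmod⟩ := encode_spec u h N humon hiN (by
    rw [degree_eq_natDegree hhne]
    exact_mod_cast WithBot.coe_lt_coe.mpr (by omega))
  obtain ⟨z, hzdeg, hzdiv, hzmod⟩ := encode_spec v b M hvmon hjM (by
    rcases eq_or_ne b 0 with hb0 | hbne
    · rw [hb0, degree_zero]
      exact WithBot.bot_lt_coe _
    · rw [degree_eq_natDegree hbne]
      exact_mod_cast WithBot.coe_lt_coe.mpr (by omega))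
  refine ⟨((⟨i, hiN⟩, ⟨j, hjN⟩), c, ⟨w, hwdeg⟩, ⟨z, hzdeg⟩), ?_⟩
  rw [← hi] at hwdiv hwmod
  rw [← hj] at hzdiv hzmod
  simp only [Recon, hwdiv, hwmod, hzdiv, hzmod]
  rw [add_sub_cancel, add_sub_cancel]
  rw [← hh, ← hg2]

variable [Fintype K]

-- finiteness of degree-lt sets
noncomputable instance degLTfin (N : ℕ) : Finite {f : K[X] // f.degree < (N : WithBot ℕ)} := by
  have e : {f : K[X] // f.degree < (N : WithBot ℕ)} ≃ (Polynomial.degreeLT K N) :=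
    Equiv.subtypeEquivRight (fun f => (Polynomial.mem_degreeLT).symm)
  have : Finite (Polynomial.degreeLT K N) :=
    Finite.of_equiv _ (Polynomial.degreeLTEquiv K N).toEquiv.symm
  exact Finite.of_equiv _ e.symm

lemma card_degLT (N : ℕ) : Nat.card {f : K[X] // f.degree < (N : WithBot ℕ)} = Fintype.card K ^ N := by
  have e : {f : K[X] // f.degree < (N : WithBot ℕ)} ≃ (Polynomial.degreeLT K N) :=
    Equiv.subtypeEquivRight (fun f => (Polynomial.mem_degreeLT).symm)
  rw [Nat.card_congr e, Nat.card_congr (Polynomial.degreeLTEquiv K N).toEquiv]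
  simp [Nat.card_eq_fintype_card]

lemma finite_setdeg (N : ℕ) : ({f : K[X] | f.degree < (N : WithBot ℕ)}).Finite :=
  @Set.toFinite _ _ (degLTfin N)

lemma card_split {α : Type} (P Q : α → Prop) (h : {x | P x}.Finite) :
    Nat.card {x // P x ∧ Q x} + Nat.card {x // P x ∧ ¬ Q x} = Nat.card {x // P x} := by
  classical
  have e1 : Nat.card {x // P x ∧ Q x} = ({x | P x ∧ Q x} : Set α).ncard :=
    Nat.card_coe_set_eq _
  have e2 : Nat.card {x // P x ∧ ¬ Q x} = ({x | P x ∧ ¬ Q x} : Set α).ncard :=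
    Nat.card_coe_set_eq _
  have e3 : Nat.card {x // P x} = ({x | P x} : Set α).ncard := Nat.card_coe_set_eq _
  rw [e1, e2, e3]
  have hu : {x | P x ∧ Q x} ∪ {x | P x ∧ ¬ Q x} = {x | P x} := by
    ext x; simp only [Set.mem_union, Set.mem_setOf_eq]; tauto
  rw [← hu, Set.ncard_union_eq ?_ (h.subset (by intro x hx; exact hx.1))
    (h.subset (by intro x hx; exact hx.1))]
  rw [Set.disjoint_left]
  rintro x ⟨-, hq⟩ ⟨-, hq'⟩
  exact hq' hq

variable [Fintype K]

lemma card_XdvdLT (N : ℕ) :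
    Nat.card {f : K[X] // f.degree < (N : WithBot ℕ) ∧ X ∣ f} = Fintype.card K ^ (N - 1) := by
  have e : {f : K[X] // f.degree < (N : WithBot ℕ) ∧ X ∣ f} ≃
      {g : K[X] // g.degree < ((N - 1 : ℕ) : WithBot ℕ)} := by
    refine ⟨fun f => ⟨f.1.divX, ?_⟩, fun g => ⟨X * g.1, ?_, Dvd.intro _ rfl⟩, ?_, ?_⟩
    · obtain ⟨f, hf, hdvd⟩ := f
      rcases eq_or_ne f 0 with rfl | hne
      · simp only [divX_zero, degree_zero]
        exact WithBot.bot_lt_coe _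
      · have h1 : 1 ≤ f.natDegree := by
          have := Polynomial.degree_le_of_dvd hdvd hne
          have hX : (X : K[X]).degree = 1 := degree_X
          rw [hX, degree_eq_natDegree hne] at this
          exact_mod_cast this
        have hfN : f.natDegree < N := (natDegree_lt_iff_degree_lt hne).mpr hf
        rcases eq_or_ne f.divX 0 with h0 | h0
        · rw [h0, degree_zero]; exact WithBot.bot_lt_coe _
        · rw [← natDegree_lt_iff_degree_lt h0, natDegree_divX_eq_natDegree_tsub_one]
          omega
    · obtain ⟨g, hg⟩ := g
      rcases eq_or_ne g 0 with rfl | hne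
      · simp only [mul_zero, degree_zero]
        exact WithBot.bot_lt_coe _
      · have hXg : X * g ≠ 0 := mul_ne_zero X_ne_zero hne
        rw [← natDegree_lt_iff_degree_lt hXg, natDegree_mul X_ne_zero hne, natDegree_X]
        have := (natDegree_lt_iff_degree_lt hne).mpr hg
        omega
    · rintro ⟨f, hf, hdvd⟩
      apply Subtype.ext
      have h0 : f.coeff 0 = 0 := X_dvd_iff.mp hdvd
      have := X_mul_divX_add f
      rw [h0, map_zero, add_zero] at this
      exact this
    · rintro ⟨g, hg⟩
      apply Subtype.ext
      ext n
      simp [coeff_divX, coeff_X_mul]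
  rw [Nat.card_congr e, card_degLT]

lemma card_notX (N : ℕ) :
    Nat.card {f : K[X] // f.degree < (N : WithBot ℕ) ∧ ¬ X ∣ f} =
      Fintype.card K ^ N - Fintype.card K ^ (N - 1) := by
  have h : Nat.card {f : K[X] // f.degree < (N : WithBot ℕ) ∧ X ∣ f} +
      Nat.card {f : K[X] // f.degree < (N : WithBot ℕ) ∧ ¬ X ∣ f} =
      Nat.card {f : K[X] // f.degree < (N : WithBot ℕ)} :=
    card_split _ _ (finite_setdeg N)
  rw [card_XdvdLT, card_degLT] at h
  omega

lemma card_zeroLT (N : ℕ) :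
    Nat.card {f : K[X] // f.degree < (N : WithBot ℕ) ∧ f = 0} = 1 := by
  rw [Nat.card_eq_one_iff_unique]
  constructor
  · constructor
    rintro ⟨f, -, rfl⟩ ⟨g, -, hg⟩
    exact Subtype.ext (by simp [hg])
  · exact ⟨⟨0, by rw [degree_zero]; exact WithBot.bot_lt_coe _, rfl⟩⟩

lemma card_nonzeroLT (N : ℕ) :
    Nat.card {f : K[X] // f.degree < (N : WithBot ℕ) ∧ ¬ f = 0} =
      Fintype.card K ^ N - 1 := by
  have h : Nat.card {f : K[X] // f.degree < (N : WithBot ℕ) ∧ f = 0} +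
      Nat.card {f : K[X] // f.degree < (N : WithBot ℕ) ∧ ¬ f = 0} =
      Nat.card {f : K[X] // f.degree < (N : WithBot ℕ)} :=
    card_split _ _ (finite_setdeg N)
  rw [card_zeroLT, card_degLT] at h
  omega

def Ep (p : ℕ) (g : K[X] × K[X]) : Prop :=
  ∃ l : K[X], l.Monic ∧ Irreducible l ∧ l ≠ X ∧ ¬ l ∣ g.1 ∧
    ∃ k : ℕ, ¬ p ∣ k ∧ l ^ k ∣ g.2 ∧ ¬ l ^ (k + 1) ∣ g.2

lemma finite_pairdeg (N : ℕ) :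
    Finite {g : K[X] × K[X] // g.1.degree < (N : WithBot ℕ) ∧ g.2.degree < (N : WithBot ℕ)} :=
  Finite.of_equiv _ (Equiv.subtypeProdEquivProd
    (p := fun f : K[X] => f.degree < (N : WithBot ℕ))
    (q := fun f : K[X] => f.degree < (N : WithBot ℕ))).symm

lemma finite_pairdeg' (N : ℕ) :
    ({g : K[X] × K[X] | g.1.degree < (N : WithBot ℕ) ∧ g.2.degree < (N : WithBot ℕ)}).Finite :=
  @Set.toFinite _ _ (finite_pairdeg N)

lemma card_pairA (N : ℕ) :
    Nat.card {g : K[X] × K[X] // (¬ X ∣ g.1 ∧ ¬ X ∣ g.2) ∧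
        g.1.degree < (N : WithBot ℕ) ∧ g.2.degree < (N : WithBot ℕ)} =
      (Fintype.card K ^ N - Fintype.card K ^ (N - 1)) ^ 2 := by
  have e1 : {g : K[X] × K[X] // (¬ X ∣ g.1 ∧ ¬ X ∣ g.2) ∧
        g.1.degree < (N : WithBot ℕ) ∧ g.2.degree < (N : WithBot ℕ)} ≃
      {g : K[X] × K[X] // (g.1.degree < (N : WithBot ℕ) ∧ ¬ X ∣ g.1) ∧
        (g.2.degree < (N : WithBot ℕ) ∧ ¬ X ∣ g.2)} :=
    Equiv.subtypeEquivRight (fun g => by tauto)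
  rw [Nat.card_congr e1, Nat.card_congr (Equiv.subtypeProdEquivProd
    (p := fun f : K[X] => f.degree < (N : WithBot ℕ) ∧ ¬ X ∣ f)
    (q := fun f : K[X] => f.degree < (N : WithBot ℕ) ∧ ¬ X ∣ f)), Nat.card_prod,
    card_notX, sq]

lemma card_pairD (N : ℕ) :
    Nat.card {g : K[X] × K[X] // g.2 ≠ 0 ∧
        g.1.degree < (N : WithBot ℕ) ∧ g.2.degree < (N : WithBot ℕ)} =
      Fintype.card K ^ N * (Fintype.card K ^ N - 1) := by
  have e1 : {g : K[X] × K[X] // g.2 ≠ 0 ∧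
        g.1.degree < (N : WithBot ℕ) ∧ g.2.degree < (N : WithBot ℕ)} ≃
      {g : K[X] × K[X] // (g.1.degree < (N : WithBot ℕ)) ∧
        (g.2.degree < (N : WithBot ℕ) ∧ ¬ g.2 = 0)} :=
    Equiv.subtypeEquivRight (fun g => by tauto)
  rw [Nat.card_congr e1, Nat.card_congr (Equiv.subtypeProdEquivProd
    (p := fun f : K[X] => f.degree < (N : WithBot ℕ))
    (q := fun f : K[X] => f.degree < (N : WithBot ℕ) ∧ ¬ f = 0)), Nat.card_prod,
    card_degLT, card_nonzeroLT]

lemma card_bad (p : ℕ) (hp2 : 2 ≤ p) (N : ℕ) :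
    Nat.card {g : K[X] × K[X] // ((¬ X ∣ g.1 ∧ ¬ X ∣ g.2) ∧
        (g.1.degree < (N : WithBot ℕ) ∧ g.2.degree < (N : WithBot ℕ))) ∧ ¬ Ep p g} ≤
      N * N * (Fintype.card K * (Fintype.card K ^ N * Fintype.card K ^ (N / 2 + 1))) := by
  classical
  have hspec : ∀ g : {g : K[X] × K[X] // ((¬ X ∣ g.1 ∧ ¬ X ∣ g.2) ∧
      (g.1.degree < (N : WithBot ℕ) ∧ g.2.degree < (N : WithBot ℕ))) ∧ ¬ Ep p g},
      ∃ t : (Fin N × Fin N) × K × {w : K[X] // w.degree < (N : WithBot ℕ)} ×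
        {z : K[X] // z.degree < ((N / 2 + 1 : ℕ) : WithBot ℕ)},
        Recon p N (N / 2 + 1) t = g.1 := by
    rintro ⟨⟨g1, g2⟩, ⟨⟨h1, h2⟩, hd1, hd2⟩, hbad⟩
    exact bad_spec p hp2 N g1 g2 h1 h2 hd1 hd2 hbad
  have hinj : Function.Injective (fun g => (hspec g).choose) := by
    intro a b hab
    have ha := (hspec a).choose_spec
    have hb := (hspec b).choose_spec
    apply Subtype.ext
    rw [← ha, ← hb]
    simp only at hab
    rw [hab]
  have hcard := Nat.card_le_card_of_injective _ hinj
  calc Nat.card _ ≤ _ := hcard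
    _ = N * N * (Fintype.card K * (Fintype.card K ^ N * Fintype.card K ^ (N / 2 + 1))) := by
      rw [Nat.card_prod, Nat.card_prod, Nat.card_prod, Nat.card_prod, card_degLT, card_degLT]
      simp [Nat.card_eq_fintype_card]

theorem statement4 (p q : ℕ) (hp : p.Prime) (hq : ∃ n : ℕ, q = p ^ n) (hq4 : 4 ≤ q)
    (K : Type) [Field K] [Fintype K] (hcard : Fintype.card K = q) :
    Filter.Tendsto
      (fun N : ℕ =>
        (Nat.card {g : Polynomial K × Polynomial K //
            (g.2 ≠ 0 ∧
              (¬ Polynomial.X ∣ g.1 ∧ ¬ Polynomial.X ∣ g.2) ∧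
              ∃ l : Polynomial K, l.Monic ∧ Irreducible l ∧ l ≠ Polynomial.X ∧
                ¬ l ∣ g.1 ∧
                ∃ k : ℕ, ¬ p ∣ k ∧ l ^ k ∣ g.2 ∧ ¬ l ^ (k + 1) ∣ g.2) ∧
            g.1.degree < (N : WithBot ℕ) ∧ g.2.degree < (N : WithBot ℕ)} : ℝ) /
        (Nat.card {g : Polynomial K × Polynomial K //
            g.2 ≠ 0 ∧
            g.1.degree < (N : WithBot ℕ) ∧ g.2.degree < (N : WithBot ℕ)} : ℝ))
      Filter.atTop (nhds ((1 - 1 / (q : ℝ)) ^ 2)) := by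
  classical
  subst hcard
  have hp2 : 2 ≤ p := hp.two_le
  set Q : ℕ := Fintype.card K with hQdef
  set qr : ℝ := (Q : ℝ) with hqr
  have hq4r : (4 : ℝ) ≤ qr := by rw [hqr]; exact_mod_cast hq4
  have hq0 : (0 : ℝ) < qr := by linarith
  have hq1 : (1 : ℝ) < qr := by linarith
  set B : ℕ → ℕ := fun N => Nat.card {g : K[X] × K[X] //
    ((¬ X ∣ g.1 ∧ ¬ X ∣ g.2) ∧
      (g.1.degree < (N : WithBot ℕ) ∧ g.2.degree < (N : WithBot ℕ))) ∧ ¬ Ep p g} with hBdef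
  -- split identity
  have hsplit : ∀ N : ℕ,
      Nat.card {g : Polynomial K × Polynomial K //
            (g.2 ≠ 0 ∧
              (¬ Polynomial.X ∣ g.1 ∧ ¬ Polynomial.X ∣ g.2) ∧
              ∃ l : Polynomial K, l.Monic ∧ Irreducible l ∧ l ≠ Polynomial.X ∧
                ¬ l ∣ g.1 ∧
                ∃ k : ℕ, ¬ p ∣ k ∧ l ^ k ∣ g.2 ∧ ¬ l ^ (k + 1) ∣ g.2) ∧
            g.1.degree < (N : WithBot ℕ) ∧ g.2.degree < (N : WithBot ℕ)} + B N =
        (Q ^ N - Q ^ (N - 1)) ^ 2 := by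
    intro N
    have h : Nat.card {g : K[X] × K[X] //
        ((¬ X ∣ g.1 ∧ ¬ X ∣ g.2) ∧
          (g.1.degree < (N : WithBot ℕ) ∧ g.2.degree < (N : WithBot ℕ))) ∧ Ep p g} +
        Nat.card {g : K[X] × K[X] //
        ((¬ X ∣ g.1 ∧ ¬ X ∣ g.2) ∧
          (g.1.degree < (N : WithBot ℕ) ∧ g.2.degree < (N : WithBot ℕ))) ∧ ¬ Ep p g} =
        Nat.card {g : K[X] × K[X] //
        ((¬ X ∣ g.1 ∧ ¬ X ∣ g.2) ∧
          (g.1.degree < (N : WithBot ℕ) ∧ g.2.degree < (N : WithBot ℕ)))} :=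
      card_split _ _ ((finite_pairdeg' N).subset (fun x hx => hx.2))
    have hA : Nat.card {g : K[X] × K[X] //
        ((¬ X ∣ g.1 ∧ ¬ X ∣ g.2) ∧
          (g.1.degree < (N : WithBot ℕ) ∧ g.2.degree < (N : WithBot ℕ)))} =
        (Q ^ N - Q ^ (N - 1)) ^ 2 := by
      have e : {g : K[X] × K[X] //
          ((¬ X ∣ g.1 ∧ ¬ X ∣ g.2) ∧
            (g.1.degree < (N : WithBot ℕ) ∧ g.2.degree < (N : WithBot ℕ)))} ≃
          {g : K[X] × K[X] // (¬ X ∣ g.1 ∧ ¬ X ∣ g.2) ∧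
            g.1.degree < (N : WithBot ℕ) ∧ g.2.degree < (N : WithBot ℕ)} :=
        Equiv.subtypeEquivRight (fun g => by tauto)
      rw [Nat.card_congr e, card_pairA]
    have hE : Nat.card {g : Polynomial K × Polynomial K //
            (g.2 ≠ 0 ∧
              (¬ Polynomial.X ∣ g.1 ∧ ¬ Polynomial.X ∣ g.2) ∧
              ∃ l : Polynomial K, l.Monic ∧ Irreducible l ∧ l ≠ Polynomial.X ∧
                ¬ l ∣ g.1 ∧
                ∃ k : ℕ, ¬ p ∣ k ∧ l ^ k ∣ g.2 ∧ ¬ l ^ (k + 1) ∣ g.2) ∧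
            g.1.degree < (N : WithBot ℕ) ∧ g.2.degree < (N : WithBot ℕ)} =
        Nat.card {g : K[X] × K[X] //
        ((¬ X ∣ g.1 ∧ ¬ X ∣ g.2) ∧
          (g.1.degree < (N : WithBot ℕ) ∧ g.2.degree < (N : WithBot ℕ))) ∧ Ep p g} := by
      refine Nat.card_congr (Equiv.subtypeEquivRight (fun g => ?_))
      unfold Ep
      constructor
      · rintro ⟨⟨h0, hx, he⟩, hd⟩
        exact ⟨⟨hx, hd⟩, he⟩
      · rintro ⟨⟨hx, hd⟩, he⟩
        exact ⟨⟨fun h0 => hx.2 (h0 ▸ dvd_zero X), hx, he⟩, hd⟩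
    rw [hE, ← hA, ← h, hBdef]
  -- pointwise formula
  have hfun : ∀ N : ℕ,
      (Nat.card {g : Polynomial K × Polynomial K //
            (g.2 ≠ 0 ∧
              (¬ Polynomial.X ∣ g.1 ∧ ¬ Polynomial.X ∣ g.2) ∧
              ∃ l : Polynomial K, l.Monic ∧ Irreducible l ∧ l ≠ Polynomial.X ∧
                ¬ l ∣ g.1 ∧
                ∃ k : ℕ, ¬ p ∣ k ∧ l ^ k ∣ g.2 ∧ ¬ l ^ (k + 1) ∣ g.2) ∧
            g.1.degree < (N : WithBot ℕ) ∧ g.2.degree < (N : WithBot ℕ)} : ℝ) /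
        (Nat.card {g : Polynomial K × Polynomial K //
            g.2 ≠ 0 ∧
            g.1.degree < (N : WithBot ℕ) ∧ g.2.degree < (N : WithBot ℕ)} : ℝ) =
      ((qr ^ N - qr ^ (N - 1)) ^ 2) / (qr ^ N * (qr ^ N - 1)) -
        (B N : ℝ) / (qr ^ N * (qr ^ N - 1)) := by
    intro N
    have hle : B N ≤ (Q ^ N - Q ^ (N - 1)) ^ 2 := by
      have := hsplit N; omega
    have h1 : Nat.card {g : Polynomial K × Polynomial K //
            (g.2 ≠ 0 ∧
              (¬ Polynomial.X ∣ g.1 ∧ ¬ Polynomial.X ∣ g.2) ∧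
              ∃ l : Polynomial K, l.Monic ∧ Irreducible l ∧ l ≠ Polynomial.X ∧
                ¬ l ∣ g.1 ∧
                ∃ k : ℕ, ¬ p ∣ k ∧ l ^ k ∣ g.2 ∧ ¬ l ^ (k + 1) ∣ g.2) ∧
            g.1.degree < (N : WithBot ℕ) ∧ g.2.degree < (N : WithBot ℕ)} =
        (Q ^ N - Q ^ (N - 1)) ^ 2 - B N := by
      have := hsplit N; omega
    rw [h1, card_pairD, ← sub_div]
    congr 1
    · have hmono : Q ^ (N - 1) ≤ Q ^ N :=
        Nat.pow_le_pow_right (by omega) (by omega)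
      push_cast [Nat.cast_sub hle, Nat.cast_sub hmono]
      ring
    · have hone : 1 ≤ Q ^ N := Nat.one_le_pow _ _ (by omega)
      rw [← hQdef]
      push_cast [Nat.cast_sub hone]
      rw [hqr]
  rw [show nhds ((1 - 1 / (qr : ℝ)) ^ 2) = nhds ((1 - 1 / qr) ^ 2 - 0) by rw [sub_zero]]
  refine Filter.Tendsto.congr (fun N => (hfun N).symm) (Filter.Tendsto.sub ?_ ?_)
  · -- main term
    have hgeo : Filter.Tendsto (fun N : ℕ => (1 / qr) ^ N) Filter.atTop (nhds 0) :=
      tendsto_pow_atTop_nhds_zero_of_lt_one (by positivity) (by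
        rw [div_lt_one hq0]; linarith)
    have hlim : Filter.Tendsto (fun N : ℕ => (1 - 1 / qr) ^ 2 / (1 - (1 / qr) ^ N))
        Filter.atTop (nhds ((1 - 1 / qr) ^ 2)) := by
      have := Filter.Tendsto.div (tendsto_const_nhds
          (x := (1 - 1 / qr) ^ 2) (f := Filter.atTop (α := ℕ)))
        (Filter.Tendsto.const_sub 1 hgeo) (by norm_num)
      simpa [Pi.div_def] using this
    refine Filter.Tendsto.congr' ?_ hlim
    filter_upwards [Filter.eventually_ge_atTop 1] with N hN
    obtain ⟨m, rfl⟩ : ∃ m, N = m + 1 := ⟨N - 1, by omega⟩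
    have hpow1 : (1:ℝ) < qr ^ (m + 1) := one_lt_pow₀ hq1 (by omega)
    have hne1 : qr ^ (m + 1) - 1 ≠ 0 := by linarith
    have hne2 : (1:ℝ) - (1 / qr) ^ (m + 1) ≠ 0 := by
      have : (1 / qr) ^ (m + 1) < 1 := pow_lt_one₀ (by positivity) (by
        rw [div_lt_one hq0]; linarith) (by omega)
      linarith
    have hqne : qr ≠ 0 := ne_of_gt hq0
    rw [div_eq_div_iff hne2 (mul_ne_zero (by positivity) hne1)]
    simp only [Nat.add_sub_cancel]
    rw [one_div, inv_pow]
    field_simp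
    ring
  · -- error term → 0
    set r : ℝ := (Real.sqrt qr)⁻¹ with hrdef
    have hsq : Real.sqrt qr ^ 2 = qr := Real.sq_sqrt hq0.le
    have hs1 : (1:ℝ) < Real.sqrt qr := by
      nlinarith [Real.sqrt_nonneg qr]
    have hr0 : 0 ≤ r := by positivity
    have hr1 : r < 1 := by
      rw [hrdef, inv_lt_one_iff₀]; right; exact hs1
    have hg : Filter.Tendsto (fun N : ℕ => 2 * qr ^ 2 * ((N:ℝ) ^ 2 * r ^ N))
        Filter.atTop (nhds 0) := by
      have := (tendsto_pow_const_mul_const_pow_of_lt_one 2 hr0 hr1).const_mul (2 * qr ^ 2)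
      simpa using this
    refine squeeze_zero' ?_ ?_ hg
    · filter_upwards [Filter.eventually_ge_atTop 1] with N hN
      have h1 : (1:ℝ) ≤ qr ^ N := one_le_pow₀ hq1.le
      apply div_nonneg (Nat.cast_nonneg _)
      nlinarith
    · filter_upwards [Filter.eventually_ge_atTop 1] with N hN
      have hcb := card_bad (K := K) p hp2 N
      have hBb : (B N : ℝ) ≤ (N:ℝ) * N * (qr * (qr ^ N * qr ^ (N / 2 + 1))) := by
        have h0 : (B N : ℝ) ≤ ((N * N * (Q * (Q ^ N * Q ^ (N / 2 + 1))) : ℕ) : ℝ) :=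
          Nat.cast_le.mpr hcb
        push_cast at h0
        rw [← hqr] at h0
        convert h0 using 2
      have hqrN : (4:ℝ) ≤ qr ^ N := le_trans hq4r (le_self_pow₀ hq1.le (by omega))
      have hD1 : qr ^ N * (qr ^ N / 2) ≤ qr ^ N * (qr ^ N - 1) := by
        have h2 : qr ^ N / 2 ≤ qr ^ N - 1 := by linarith
        have : (0:ℝ) < qr ^ N := by positivity
        nlinarith
      have hDpos : (0:ℝ) < qr ^ N * (qr ^ N / 2) := by positivity
      have hsN : Real.sqrt qr ^ N * Real.sqrt qr ^ N = qr ^ N := by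
        rw [← pow_add, ← two_mul, pow_mul, hsq]
      have hkey : qr ^ (N / 2) / qr ^ N ≤ r ^ N := by
        have h1 : qr ^ (N / 2) ≤ Real.sqrt qr ^ N := by
          have : qr ^ (N / 2) = Real.sqrt qr ^ (2 * (N / 2)) := by
            rw [pow_mul, hsq]
          rw [this]
          exact pow_le_pow_right₀ hs1.le (by omega)
        calc qr ^ (N / 2) / qr ^ N ≤ Real.sqrt qr ^ N / qr ^ N := by gcongr
            _ = r ^ N := by
              rw [← hsN, div_mul_eq_div_div, div_self (by positivity), hrdef, inv_pow, one_div]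
      calc (B N : ℝ) / (qr ^ N * (qr ^ N - 1)) ≤
          ((N:ℝ) * N * (qr * (qr ^ N * qr ^ (N / 2 + 1)))) / (qr ^ N * (qr ^ N / 2)) :=
            div_le_div₀ (by positivity) hBb hDpos hD1
        _ = 2 * qr ^ 2 * ((N:ℝ) ^ 2 * (qr ^ (N / 2) / qr ^ N)) := by
            rw [pow_succ]
            field_simp
        _ ≤ 2 * qr ^ 2 * ((N:ℝ) ^ 2 * r ^ N) := by
            have : (0:ℝ) ≤ 2 * qr ^ 2 * (N:ℝ)^2 := by positivity
            nlinarith [hkey]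
end

section
/- Let q be a power of a prime p. Let P be the subgroup of GL₃(𝔽_q) consisting of all matrices of the form [[1,0,a],[0,1,b],[0,0,c]] with a, b ∈ 𝔽_q and c ∈ 𝔽_q^×, and let U be its subgroup of such matrices with c = 1. If H is a subgroup of P whose order is divisible by q², then U ⊆ H. -/
open scoped MatrixGroups

theorem statement6 (p q : ℕ) (hp : p.Prime) (hq : ∃ n : ℕ, q = p ^ n)
    (K : Type) [Field K] [Fintype K] (hcard : Fintype.card K = q)
    (H : Subgroup (GL (Fin 3) K))
    -- `H` is a subgroup of `P`, the group of matrices `[[1,0,a],[0,1,b],[0,0,c]]`, `c ≠ 0`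
    (hHP : ∀ A ∈ H, ∃ a b c : K, c ≠ 0 ∧
      (A : Matrix (Fin 3) (Fin 3) K) = !![1, 0, a; 0, 1, b; 0, 0, c])
    -- the order of `H` is divisible by `q²`
    (hq2 : q ^ 2 ∣ Nat.card H) :
    -- `U ⊆ H`
    ∀ A : GL (Fin 3) K,
      (∃ a b : K, (A : Matrix (Fin 3) (Fin 3) K) = !![1, 0, a; 0, 1, b; 0, 0, 1]) →
        A ∈ H := by
  classical
  set f : H →* Kˣ := (Matrix.GeneralLinearGroup.det).comp H.subtype with hf
  have hq1 : 1 < q := hcard ▸ Fintype.one_lt_card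
  -- elements of kernel have the U shape
  have hker_shape : ∀ B : f.ker, ∃ a b : K,
      (((B : H) : GL (Fin 3) K) : Matrix (Fin 3) (Fin 3) K)
        = !![1, 0, a; 0, 1, b; 0, 0, 1] := by
    rintro ⟨⟨B, hBH⟩, hBk⟩
    obtain ⟨a, b, c, hc, hB⟩ := hHP B hBH
    have hdet : ((B : GL (Fin 3) K) : Matrix (Fin 3) (Fin 3) K).det = 1 := by
      have := congrArg (Units.val) (MonoidHom.mem_ker.mp hBk)
      simpa [hf] using this
    rw [hB] at hdet
    simp [Matrix.det_fin_three, Matrix.vecHead, Matrix.vecTail] at hdet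
    exact ⟨a, b, by rw [hB, hdet]⟩
  let g : f.ker → K × K := fun B =>
    ((((B : H) : GL (Fin 3) K) : Matrix (Fin 3) (Fin 3) K) 0 2,
     (((B : H) : GL (Fin 3) K) : Matrix (Fin 3) (Fin 3) K) 1 2)
  have hentry : ∀ (B : f.ker) (a b : K),
      (((B : H) : GL (Fin 3) K) : Matrix (Fin 3) (Fin 3) K)
        = !![1, 0, a; 0, 1, b; 0, 0, 1] → g B = (a, b) := by
    intro B a b hB
    simp only [g, hB]
    norm_num
    exact ⟨rfl, rfl⟩
  have hginj : Function.Injective g := by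
    intro B C hBC
    obtain ⟨a, b, hB⟩ := hker_shape B
    obtain ⟨a', b', hC⟩ := hker_shape C
    have e1 := hentry B a b hB
    have e2 := hentry C a' b' hC
    rw [e1, e2] at hBC
    have h1 : a = a' := congrArg Prod.fst hBC
    have h2 : b = b' := congrArg Prod.snd hBC
    exact Subtype.ext (Subtype.ext (Units.ext (by rw [hB, hC, h1, h2])))
  -- cardinality counting
  have hcardH : Nat.card H = Nat.card (H ⧸ f.ker) * Nat.card f.ker :=
    Subgroup.card_eq_card_quotient_mul_card_subgroup f.ker
  have hquot : Nat.card (H ⧸ f.ker) = Nat.card f.range :=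
    Nat.card_congr (QuotientGroup.quotientKerEquivRange f).toEquiv
  have hrange_dvd : Nat.card f.range ∣ q - 1 := by
    have h := Subgroup.card_subgroup_dvd_card f.range
    rwa [Nat.card_eq_fintype_card (α := Kˣ), Fintype.card_units, hcard] at h
  have hcop : Nat.Coprime (q ^ 2) (Nat.card f.range) := by
    have h1 : Nat.Coprime q (q - 1) := by
      have h2 : Nat.gcd (1 + (q - 1)) (q - 1) = Nat.gcd 1 (q - 1) :=
        Nat.gcd_add_self_left (q - 1) 1
      have h3 : 1 + (q - 1) = q := by omega
      simpa [Nat.Coprime, h3] using h2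
    exact Nat.Coprime.pow_left 2 (Nat.Coprime.coprime_dvd_right hrange_dvd h1)
  have hker_dvd : q ^ 2 ∣ Nat.card f.ker := by
    rw [hcardH, hquot] at hq2
    exact Nat.Coprime.dvd_of_dvd_mul_left hcop hq2
  have hKK : Nat.card (K × K) = q ^ 2 := by
    simp [Nat.card_eq_fintype_card, hcard, sq]
  have hle : Nat.card f.ker ≤ q ^ 2 := by
    rw [← hKK]
    exact Nat.card_le_card_of_injective g hginj
  haveI : Nonempty f.ker := ⟨1⟩
  have hkercard : Nat.card f.ker = q ^ 2 :=
    le_antisymm hle (Nat.le_of_dvd Nat.card_pos hker_dvd)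
  have hgbij : Function.Bijective g := by
    rw [Nat.bijective_iff_injective_and_card]
    exact ⟨hginj, by rw [hkercard, hKK]⟩
  rintro A ⟨a, b, hA⟩
  obtain ⟨B, hB⟩ := hgbij.2 (a, b)
  obtain ⟨a', b', hBm⟩ := hker_shape B
  rw [hentry B a' b' hBm] at hB
  have h1 : a' = a := congrArg Prod.fst hB
  have h2 : b' = b := congrArg Prod.snd hB
  have : ((B : H) : GL (Fin 3) K) = A := Units.ext (by rw [hBm, hA, h1, h2])
  exact this ▸ ((B : H)).2
end

section
/- Let q be a power of a prime p. Let P be the subgroup of GL₂(𝔽_q) consisting of all matrices of the form [[1,a],[0,c]] with a ∈ 𝔽_q and c ∈ 𝔽_q^×, and let U be its subgroup of such matrices with c = 1. If H is a subgroup of P whose order is divisible by q, then U ⊆ H. -/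
open scoped MatrixGroups

lemma aux_pow_entries {K : Type} [Field K] (a c : K) (m : ℕ) :
    ((!![1, a; 0, c] : Matrix (Fin 2) (Fin 2) K) ^ m) 1 0 = 0 ∧
    ((!![1, a; 0, c] : Matrix (Fin 2) (Fin 2) K) ^ m) 1 1 = c ^ m := by
  induction m with
  | zero => simp [Matrix.one_apply]
  | succ n ih =>
    rw [pow_succ, pow_succ]
    constructor <;> simp [Matrix.mul_apply, Fin.sum_univ_two, ih.1, ih.2]

theorem statement7 (p q : ℕ) (hp : p.Prime) (hq : ∃ n : ℕ, q = p ^ n)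
    (K : Type) [Field K] [Fintype K] (hcard : Fintype.card K = q)
    (H : Subgroup (GL (Fin 2) K))
    -- `H` is a subgroup of `P`, the group of matrices `[[1,a],[0,c]]`, `c ≠ 0`
    (hHP : ∀ A ∈ H, ∃ a c : K, c ≠ 0 ∧
      (A : Matrix (Fin 2) (Fin 2) K) = !![1, a; 0, c])
    -- the order of `H` is divisible by `q`
    (hq1 : q ∣ Nat.card H) :
    -- `U ⊆ H`
    ∀ A : GL (Fin 2) K,
      (∃ a : K, (A : Matrix (Fin 2) (Fin 2) K) = !![1, a; 0, 1]) → A ∈ H := by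
  classical
  obtain ⟨n, rfl⟩ := hq
  haveI : Fact p.Prime := ⟨hp⟩
  haveI : Fintype (GL (Fin 2) K) := Fintype.ofFinite _
  haveI : Fintype H := Fintype.ofFinite _
  have hn : 1 ≤ n := by
    by_contra h
    have : n = 0 := by omega
    subst this
    have h2 := Fintype.one_lt_card (α := K)
    rw [pow_zero] at hcard
    omega
  -- a Sylow p-subgroup of H
  obtain ⟨S⟩ : Nonempty (Sylow p H) := inferInstance
  have hcardH : Nat.card H ≠ 0 := Nat.card_pos.ne'
  have hle : n ≤ (Nat.card H).factorization p := by
    rw [← Nat.Prime.pow_dvd_iff_le_factorization hp hcardH]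
    exact hq1
  have hcardS : p ^ n ≤ Nat.card S := by
    rw [S.card_eq_multiplicity]
    exact Nat.pow_le_pow_right hp.pos hle
  -- every element of S has matrix !![1, a; 0, 1]
  have key : ∀ s : S, ∃ a : K,
      (((s : H) : GL (Fin 2) K) : Matrix (Fin 2) (Fin 2) K) = !![1, a; 0, 1] := by
    intro s
    obtain ⟨a, c, hc0, hmat⟩ := hHP ((s : H) : GL (Fin 2) K) (s : H).2
    obtain ⟨k, hk⟩ := (IsPGroup.iff_orderOf.mp S.2) s
    have hpow : (((s : H) : GL (Fin 2) K) : Matrix (Fin 2) (Fin 2) K) ^ p ^ k = 1 := by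
      have : (s : S) ^ p ^ k = 1 := by
        rw [← hk]; exact pow_orderOf_eq_one s
      have h2 : ((s : H) : GL (Fin 2) K) ^ p ^ k = 1 := by
        have := congrArg (fun x : S => (((x : H) : GL (Fin 2) K))) this
        simpa using this
      calc (((s : H) : GL (Fin 2) K) : Matrix (Fin 2) (Fin 2) K) ^ p ^ k
          = ((((s : H) : GL (Fin 2) K) ^ p ^ k : GL (Fin 2) K) : Matrix (Fin 2) (Fin 2) K) := by
            rw [Units.val_pow_eq_pow_val]
        _ = 1 := by rw [h2]; rfl
    have hcpk : c ^ p ^ k = 1 := by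
      have := (aux_pow_entries a c (p ^ k)).2
      rw [← hmat, hpow] at this
      simpa [Matrix.one_apply] using this.symm
    have hcq : c ^ (p ^ n - 1) = 1 := by
      have := FiniteField.pow_card_sub_one_eq_one c hc0
      rwa [hcard] at this
    have hco : Nat.Coprime (p ^ k) (p ^ n - 1) := by
      apply Nat.Coprime.pow_left
      rw [hp.coprime_iff_not_dvd]
      intro hdvd
      have h1 : p ∣ p ^ n := dvd_pow_self p (by omega)
      have h2 : p ^ n - (p ^ n - 1) = 1 := by
        have : 1 ≤ p ^ n := Nat.one_le_pow _ _ hp.pos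
        omega
      have := Nat.dvd_sub h1 hdvd
      rw [h2] at this
      exact absurd (Nat.dvd_one.mp this) hp.one_lt.ne'
    have hc1 : c = 1 := by
      have h1 := orderOf_dvd_of_pow_eq_one hcpk
      have h2 := orderOf_dvd_of_pow_eq_one hcq
      have := Nat.dvd_gcd h1 h2
      rw [Nat.Coprime] at hco
      rw [hco, Nat.dvd_one] at this
      exact orderOf_eq_one_iff.mp this
    exact ⟨a, by rw [hmat, hc1]⟩
  -- the map S → K reading off the `a` entry
  set f : S → K := fun s => (((s : H) : GL (Fin 2) K) : Matrix (Fin 2) (Fin 2) K) 0 1 with hf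
  have hfs : ∀ s : S, (((s : H) : GL (Fin 2) K) : Matrix (Fin 2) (Fin 2) K) = !![1, f s; 0, 1] := by
    intro s
    obtain ⟨a, ha⟩ := key s
    have : f s = a := by rw [hf]; simp [ha]
    rw [this, ha]
  have hinj : Function.Injective f := by
    intro s t hst
    have h1 := hfs s
    have h2 := hfs t
    rw [hst] at h1
    have : ((s : H) : GL (Fin 2) K) = ((t : H) : GL (Fin 2) K) :=
      Units.ext (h1.trans h2.symm)
    exact Subtype.ext (Subtype.ext this)
  have hbij : Function.Bijective f := by
    rw [Nat.bijective_iff_injective_and_card]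
    refine ⟨hinj, le_antisymm (Nat.card_le_card_of_injective f hinj) ?_⟩
    have hK : Nat.card K = p ^ n := by rw [Nat.card_eq_fintype_card, hcard]
    rw [hK]
    exact hcardS
  intro A ⟨a, hA⟩
  obtain ⟨s, hs⟩ := hbij.2 a
  have : A = ((s : H) : GL (Fin 2) K) := by
    apply Units.ext
    rw [hA, hfs s, hs]
  rw [this]
  exact (s : H).2
end

section
/- Let F be a finite field of characteristic p and let G be a subgroup of GL₂(F) such that G contains a Sylow p-subgroup of GL₂(F) and G acts irreducibly on F². Then SL₂(F) ⊆ G. -/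
open scoped MatrixGroups Pointwise

section Aux
variable {F : Type} [Field F]

/-- upper elementary matrix as a unit -/
def Eu (a : F) : GL (Fin 2) F :=
  ⟨!![1, a; 0, 1], !![1, -a; 0, 1], by simp [Matrix.mul_fin_two, Matrix.one_fin_two],
    by simp [Matrix.mul_fin_two, Matrix.one_fin_two]⟩

/-- lower elementary matrix as a unit -/
def Eu' (a : F) : GL (Fin 2) F :=
  ⟨!![1, 0; a, 1], !![1, 0; -a, 1], by simp [Matrix.mul_fin_two, Matrix.one_fin_two],
    by simp [Matrix.mul_fin_two, Matrix.one_fin_two]⟩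

@[simp] lemma Eu_val (a : F) : (Eu a : Matrix (Fin 2) (Fin 2) F) = !![1, a; 0, 1] := rfl
@[simp] lemma Eu'_val (a : F) : (Eu' a : Matrix (Fin 2) (Fin 2) F) = !![1, 0; a, 1] := rfl

lemma Eu_mul (a b : F) : Eu a * Eu b = Eu (a + b) := by
  ext : 1
  simp [Eu, Units.val_mul, Matrix.mul_fin_two, add_comm]

@[simp] lemma Eu_zero : (Eu (0 : F)) = 1 := by
  ext : 1; simp [Eu, Matrix.one_fin_two]

@[simp] lemma Eu'_zero : (Eu' (0 : F)) = 1 := by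
  ext : 1; simp [Eu', Matrix.one_fin_two]

lemma Eu_inv (a : F) : (Eu a)⁻¹ = Eu (-a) :=
  (eq_inv_of_mul_eq_one_left (by rw [Eu_mul]; simp)).symm

lemma Eu'_inv (a : F) : (Eu' a)⁻¹ = Eu' (-a) := by
  refine (eq_inv_of_mul_eq_one_left ?_).symm
  ext : 1
  simp [Eu', Units.val_mul, Matrix.mul_fin_two, Matrix.one_fin_two]

lemma Eu_pow (a : F) (n : ℕ) : Eu a ^ n = Eu (n * a) := by
  induction n with
  | zero => simp
  | succ n ih => rw [pow_succ, ih, Eu_mul]; push_cast; ring_nf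

/-- the group of upper unitriangular matrices -/
def UU (F : Type) [Field F] : Subgroup (GL (Fin 2) F) where
  carrier := Set.range Eu
  one_mem' := ⟨0, Eu_zero⟩
  mul_mem' := by rintro _ _ ⟨a, rfl⟩ ⟨b, rfl⟩; exact ⟨a + b, (Eu_mul a b).symm⟩
  inv_mem' := by rintro _ ⟨a, rfl⟩; exact ⟨-a, (Eu_inv a).symm⟩

variable (p : ℕ) [hp : Fact p.Prime] [CharP F p]

omit hp in
lemma UU_pgroup : IsPGroup p (UU F) := by
  intro g
  obtain ⟨a, ha⟩ := g.2
  refine ⟨1, ?_⟩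
  have : (g : GL (Fin 2) F) ^ p ^ 1 = 1 := by
    rw [← ha, pow_one, Eu_pow, CharP.cast_eq_zero, zero_mul, Eu_zero]
  exact Subtype.ext (by simpa using this)

omit hp in
lemma sq_fin_two (N : Matrix (Fin 2) (Fin 2) F) :
    N * N = (N 0 0 + N 1 1) • N - (N.det) • (1 : Matrix (Fin 2) (Fin 2) F) := by
  ext i j
  fin_cases i <;> fin_cases j <;>
    simp [Matrix.mul_apply, Fin.sum_univ_two, Matrix.det_fin_two, Matrix.one_apply] <;> ring

omit hp in
lemma nil_fin_two (N : Matrix (Fin 2) (Fin 2) F) (m : ℕ) (hm : 1 ≤ m) (h : N ^ m = 0) :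
    N 0 0 + N 1 1 = 0 ∧ N.det = 0 := by
  have hdet : N.det = 0 := by
    have : N.det ^ m = 0 := by rw [← Matrix.det_pow, h]; simp [Matrix.det_fin_two]
    exact pow_eq_zero_iff (by omega) |>.mp this
  refine ⟨?_, hdet⟩
  by_cases hN : N = 0
  · simp [hN]
  set t := N 0 0 + N 1 1 with ht
  have hsq : N * N = t • N := by rw [sq_fin_two, hdet]; simp [ht]
  have key : ∀ j : ℕ, N ^ (j + 1) = t ^ j • N := by
    intro j
    induction j with
    | zero => simp
    | succ j ih =>
      rw [pow_succ, ih, smul_mul_assoc, ← sq, sq, hsq, smul_smul, pow_succ]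
  have h0 : t ^ (m - 1) • N = 0 := by
    rw [← key, Nat.sub_add_cancel hm, h]
  obtain ⟨i, j, hij⟩ : ∃ i j, N i j ≠ 0 := by
    by_contra hc
    push_neg at hc
    exact hN (by ext i j; simp [hc])
  have : t ^ (m - 1) * N i j = 0 := by
    have := congrFun (congrFun h0 i) j
    simpa using this
  have ht0 : t ^ (m-1) = 0 := by
    rcases mul_eq_zero.mp this with h' | h'
    · exact h'
    · exact absurd h' hij
  rcases Nat.eq_or_lt_of_le hm with h1 | h1
  · exfalso; apply hN; rw [← h1] at h; simpa using h
  · exact pow_eq_zero_iff (by omega) |>.mp ht0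

lemma torsion_unip (A : GL (Fin 2) F) (k : ℕ) (h : A ^ (p ^ k) = 1) :
    ((A : Matrix (Fin 2) (Fin 2) F) - 1) 0 0 + ((A : Matrix (Fin 2) (Fin 2) F) - 1) 1 1 = 0 ∧
    ((A : Matrix (Fin 2) (Fin 2) F) - 1).det = 0 := by
  set N : Matrix (Fin 2) (Fin 2) F := (A : Matrix (Fin 2) (Fin 2) F) - 1 with hN
  have hmat : (A : Matrix (Fin 2) (Fin 2) F) ^ (p ^ k) = 1 := by
    have := congrArg (Units.val) h
    simpa using this
  have hnil : N ^ (p ^ k) = 0 := by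
    rw [hN, sub_pow_char_pow_of_commute _ _ (Commute.one_right _), hmat, one_pow, sub_self]
  exact nil_fin_two N _ (Nat.one_le_iff_ne_zero.mpr (pow_ne_zero _ hp.out.ne_zero)) hnil

lemma UU_maximal {Q : Subgroup (GL (Fin 2) F)} (hQ : IsPGroup p Q) (hle : UU F ≤ Q) :
    Q = UU F := by
  refine le_antisymm ?_ hle
  intro A hA
  obtain ⟨k, hk⟩ := hQ ⟨A, hA⟩
  have hApow : A ^ (p ^ k) = 1 := by
    have := congrArg (Subtype.val) hk
    simpa using this
  obtain ⟨htr, hdet⟩ := torsion_unip p A k hApow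
  have hAE : A * Eu 1 ∈ Q := mul_mem hA (hle ⟨1, rfl⟩)
  obtain ⟨k', hk'⟩ := hQ ⟨A * Eu 1, hAE⟩
  have hApow' : (A * Eu 1) ^ (p ^ k') = 1 := by
    have := congrArg (Subtype.val) hk'
    simpa using this
  obtain ⟨htr', -⟩ := torsion_unip p (A * Eu 1) k' hApow'
  set M : Matrix (Fin 2) (Fin 2) F := (A : Matrix (Fin 2) (Fin 2) F) with hMdef
  have e1 : ((A * Eu 1 : GL (Fin 2) F) : Matrix (Fin 2) (Fin 2) F) = M * !![1,1;0,1] := rfl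
  rw [e1] at htr'
  have hmul : (M * !![(1:F),1;0,1] - 1) 0 0 + (M * !![(1:F),1;0,1] - 1) 1 1
      = (M - 1) 0 0 + (M - 1) 1 1 + M 1 0 := by
    simp [Matrix.mul_apply, Fin.sum_univ_two, Matrix.one_apply]
    ring
  rw [hmul, htr, zero_add] at htr'
  have s00 : (M - 1) 0 0 = M 0 0 - 1 := by simp [Matrix.one_apply]
  have s11 : (M - 1) 1 1 = M 1 1 - 1 := by simp [Matrix.one_apply]
  have s01 : (M - 1) 0 1 = M 0 1 := by simp [Matrix.one_apply]
  have s10 : (M - 1) 1 0 = M 1 0 := by simp [Matrix.one_apply]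
  rw [s00, s11] at htr
  rw [Matrix.det_fin_two, s00, s11, s01, s10, htr'] at hdet
  have h00 : M 0 0 = 1 := by
    have hsq0 : (M 0 0 - 1) * (M 0 0 - 1) = 0 := by
      linear_combination (M 0 0 - 1) * htr - hdet
    have := mul_self_eq_zero.mp hsq0
    linear_combination this
  have h11' : M 1 1 = 1 := by linear_combination htr - h00
  refine ⟨M 0 1, ?_⟩
  refine Units.ext ?_
  rw [Eu_val]
  ext i j
  fin_cases i <;> fin_cases j
  · simpa using h00.symm
  · simp [hMdef]
  · simpa using htr'.symm
  · simpa using h11'.symm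

/-- `UU` as a Sylow subgroup -/
def SylUU (F : Type) [Field F] (p : ℕ) [Fact p.Prime] [CharP F p] :
    Sylow p (GL (Fin 2) F) :=
  ⟨UU F, UU_pgroup p, fun hQ hle => UU_maximal p hQ hle⟩

/-- decomposition, step 1: lower-left entry nonzero -/
lemma dec1 (B : GL (Fin 2) F) (hdet : (B : Matrix (Fin 2) (Fin 2) F).det = 1)
    (hc : (B : Matrix (Fin 2) (Fin 2) F) 1 0 ≠ 0) :
    ∃ u v, B = Eu u * Eu' ((B : Matrix (Fin 2) (Fin 2) F) 1 0) * Eu v := by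
  set Bm : Matrix (Fin 2) (Fin 2) F := (B : Matrix (Fin 2) (Fin 2) F) with hBm
  set c : F := Bm 1 0 with hc'
  rw [Matrix.det_fin_two] at hdet
  refine ⟨(Bm 0 0 - 1)/c, (Bm 1 1 - 1)/c, ?_⟩
  refine Units.ext ?_
  show Bm = _
  rw [Units.val_mul, Units.val_mul, Eu_val, Eu'_val, Eu_val, Matrix.mul_fin_two,
    Matrix.mul_fin_two]
  ext i j
  fin_cases i <;> fin_cases j
  · show Bm 0 0 = _
    simp
    field_simp
    ring
  · show Bm 0 1 = _
    simp
    field_simp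
    linear_combination -hdet
  · show Bm 1 0 = _
    simp [hc']
  · show Bm 1 1 = _
    simp
    field_simp
    ring

/-- decomposition of a determinant-one matrix into elementary matrices -/
lemma dec (B : GL (Fin 2) F) (hdet : (B : Matrix (Fin 2) (Fin 2) F).det = 1) :
    ∃ u c v d, B = Eu u * Eu' c * Eu v * Eu' d := by
  by_cases hc : (B : Matrix (Fin 2) (Fin 2) F) 1 0 ≠ 0
  · obtain ⟨u, v, h⟩ := dec1 B hdet hc
    exact ⟨u, (B : Matrix (Fin 2) (Fin 2) F) 1 0, v, 0, by rw [Eu'_zero, mul_one]; exact h⟩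
  · push_neg at hc
    set B' : GL (Fin 2) F := B * Eu' 1 with hB'
    have hdet' : (B' : Matrix (Fin 2) (Fin 2) F).det = 1 := by
      rw [hB', Units.val_mul, Matrix.det_mul, hdet, Eu'_val, Matrix.det_fin_two]
      simp
    have h10 : (B' : Matrix (Fin 2) (Fin 2) F) 1 0
        = (B : Matrix (Fin 2) (Fin 2) F) 1 1 := by
      rw [hB', Units.val_mul, Eu'_val]
      simp [Matrix.mul_apply, Fin.sum_univ_two, hc]
    have h11ne : (B : Matrix (Fin 2) (Fin 2) F) 1 1 ≠ 0 := by
      intro h0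
      rw [Matrix.det_fin_two, hc, h0] at hdet
      simp at hdet
    obtain ⟨u, v, h⟩ := dec1 B' hdet' (by rw [h10]; exact h11ne)
    refine ⟨u, (B' : Matrix (Fin 2) (Fin 2) F) 1 0, v, -1, ?_⟩
    rw [← h, ← Eu'_inv, hB', mul_inv_cancel_right]
end Aux

theorem statement8 (p : ℕ) (hp : p.Prime) (F : Type) [Field F] [Fintype F] [CharP F p]
    (G : Subgroup (GL (Fin 2) F))
    -- `G` contains a Sylow `p`-subgroup of `GL₂(F)`
    (hsyl : ∃ Q : Sylow p (GL (Fin 2) F), (Q : Subgroup (GL (Fin 2) F)) ≤ G)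
    -- `G` acts irreducibly on `F²`
    (hirr : ∀ W : Submodule F (Fin 2 → F),
      (∀ A ∈ G, ∀ v ∈ W, (A : Matrix (Fin 2) (Fin 2) F).mulVec v ∈ W) → W = ⊥ ∨ W = ⊤) :
    -- `SL₂(F) ⊆ G`
    ∀ A : GL (Fin 2) F, (A : Matrix (Fin 2) (Fin 2) F).det = 1 → A ∈ G := by
  haveI : Fact p.Prime := ⟨hp⟩
  obtain ⟨Q, hQG⟩ := hsyl
  -- G contains a conjugate of the unitriangular group
  obtain ⟨y, hy⟩ := MulAction.exists_smul_eq (GL (Fin 2) F) (SylUU F p) Q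
  have hG1 : ∀ a : F, y * Eu a * y⁻¹ ∈ G := by
    intro a
    apply hQG
    rw [← hy, Sylow.coe_subgroup_smul]
    have : Eu a ∈ (SylUU F p : Subgroup (GL (Fin 2) F)) := ⟨a, rfl⟩
    simpa using Subgroup.smul_mem_pointwise_smul _ (MulAut.conj y) _ this
  -- the vector w
  set e₁ : Fin 2 → F := ![1, 0] with he₁
  set w : Fin 2 → F := (y : Matrix (Fin 2) (Fin 2) F).mulVec e₁ with hw
  have hwne : w ≠ 0 := by
    intro h0
    have : ((y⁻¹ : GL (Fin 2) F) : Matrix (Fin 2) (Fin 2) F).mulVec w = e₁ := by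
      rw [hw, Matrix.mulVec_mulVec, ← Units.val_mul, inv_mul_cancel]
      simp [Matrix.one_mulVec]
    rw [h0] at this
    simp [Matrix.mulVec_zero] at this
    have := congrFun this 0
    simp [he₁] at this
  -- the span of the orbit of w
  set S : Set (Fin 2 → F) :=
    {v | ∃ B : GL (Fin 2) F, B ∈ G ∧ v = (B : Matrix (Fin 2) (Fin 2) F).mulVec w} with hS
  set W : Submodule F (Fin 2 → F) := Submodule.span F S with hW
  have hWinv : ∀ A ∈ G, ∀ v ∈ W, (A : Matrix (Fin 2) (Fin 2) F).mulVec v ∈ W := by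
    intro A hA v hv
    have hle : W ≤ W.comap (Matrix.mulVecLin (A : Matrix (Fin 2) (Fin 2) F)) := by
      rw [hW, Submodule.span_le]
      rintro s ⟨B, hB, rfl⟩
      simp only [SetLike.mem_coe, Submodule.mem_comap, Matrix.mulVecLin_apply]
      rw [Matrix.mulVec_mulVec, ← Units.val_mul]
      exact Submodule.subset_span ⟨A * B, mul_mem hA hB, rfl⟩
    have := hle hv
    simpa using this
  have hwW : w ∈ W := Submodule.subset_span ⟨1, one_mem G, by simp [Matrix.one_mulVec]⟩
  have hWtop : W = ⊤ := by
    rcases hirr W hWinv with h | h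
    · exfalso; rw [h] at hwW; exact hwne (by simpa using hwW)
    · exact h
  -- find g₁ moving w out of its line
  have hex : ∃ B : GL (Fin 2) F, B ∈ G ∧
      (B : Matrix (Fin 2) (Fin 2) F).mulVec w ∉ Submodule.span F {w} := by
    by_contra hcon
    push_neg at hcon
    have hle : W ≤ Submodule.span F {w} := by
      rw [hW, Submodule.span_le]
      rintro s ⟨B, hB, rfl⟩
      exact hcon B hB
    rw [hWtop] at hle
    have h10 : e₁ ∈ Submodule.span F {w} := hle trivial
    have h01 : (![0, 1] : Fin 2 → F) ∈ Submodule.span F {w} := hle trivial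
    obtain ⟨cc, hcc⟩ := Submodule.mem_span_singleton.mp h10
    obtain ⟨dd, hdd⟩ := Submodule.mem_span_singleton.mp h01
    have hcc0 := congrFun hcc 0
    have hcc1 := congrFun hcc 1
    have hdd1 := congrFun hdd 1
    simp [he₁] at hcc0 hcc1 hdd1
    rcases hcc1 with h' | h'
    · rw [h'] at hcc0; simp at hcc0
    · rw [h'] at hdd1; simp at hdd1
  obtain ⟨g₁, hg₁, hg₁w⟩ := hex
  set w' : Fin 2 → F := (g₁ : Matrix (Fin 2) (Fin 2) F).mulVec w with hw'
  -- build the change of basis matrix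
  set P : Matrix (Fin 2) (Fin 2) F := !![w 0, w' 0; w 1, w' 1] with hP
  have hPdet : P.det ≠ 0 := by
    intro h0
    rw [hP, Matrix.det_fin_two_of] at h0
    apply hg₁w
    rw [Submodule.mem_span_singleton]
    have hwi : w 0 ≠ 0 ∨ w 1 ≠ 0 := by
      by_contra hc
      push_neg at hc
      apply hwne
      ext i
      fin_cases i
      · simpa using hc.1
      · simpa using hc.2
    rcases hwi with hi | hi
    · refine ⟨w' 0 / w 0, ?_⟩
      ext j
      fin_cases j
      · show w' 0 / w 0 * w 0 = w' 0
        field_simp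
      · show w' 0 / w 0 * w 1 = w' 1
        rw [div_mul_eq_mul_div, div_eq_iff hi]
        linear_combination -h0
    · refine ⟨w' 1 / w 1, ?_⟩
      ext j
      fin_cases j
      · show w' 1 / w 1 * w 0 = w' 0
        rw [div_mul_eq_mul_div, div_eq_iff hi]
        linear_combination h0
      · show w' 1 / w 1 * w 1 = w' 1
        field_simp
  obtain ⟨Pu, hPu⟩ := (Matrix.isUnit_iff_isUnit_det P).mpr (isUnit_iff_ne_zero.mpr hPdet)
  have hPe₁ : (Pu : Matrix (Fin 2) (Fin 2) F).mulVec e₁ = w := by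
    rw [hPu, hP]
    ext i
    fin_cases i <;> simp [Matrix.mulVec, dotProduct, Fin.sum_univ_two, he₁]
  have hPe₂ : (Pu : Matrix (Fin 2) (Fin 2) F).mulVec ![0, 1] = w' := by
    rw [hPu, hP]
    ext i
    fin_cases i <;> simp [Matrix.mulVec, dotProduct, Fin.sum_univ_two]
  have hPinv : ∀ v u : Fin 2 → F, (Pu : Matrix (Fin 2) (Fin 2) F).mulVec v = u →
      ((Pu⁻¹ : GL (Fin 2) F) : Matrix (Fin 2) (Fin 2) F).mulVec u = v := by
    intro v u h
    rw [← h, Matrix.mulVec_mulVec, ← Units.val_mul, inv_mul_cancel]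
    simp [Matrix.one_mulVec]
  -- M1 = Pu⁻¹ * y fixes e₁
  set M1 : GL (Fin 2) F := (Pu : GL (Fin 2) F)⁻¹ * y with hM1
  have hM1e : (M1 : Matrix (Fin 2) (Fin 2) F).mulVec e₁ = e₁ := by
    rw [hM1, Units.val_mul, ← Matrix.mulVec_mulVec, ← hw, hPinv e₁ w hPe₁]
  have hM1_00 : (M1 : Matrix (Fin 2) (Fin 2) F) 0 0 = 1 := by
    have := congrFun hM1e 0
    simpa [Matrix.mulVec, dotProduct, Fin.sum_univ_two, he₁] using this
  have hM1_10 : (M1 : Matrix (Fin 2) (Fin 2) F) 1 0 = 0 := by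
    have := congrFun hM1e 1
    simpa [Matrix.mulVec, dotProduct, Fin.sum_univ_two, he₁] using this
  -- key identity 1
  have key1 : ∀ c : F, Eu c = M1 * Eu (c * (M1 : Matrix (Fin 2) (Fin 2) F) 1 1) * M1⁻¹ := by
    intro c
    rw [eq_mul_inv_iff_mul_eq]
    refine Units.ext ?_
    simp only [Units.val_mul, Eu_val]
    ext i j
    fin_cases i <;> fin_cases j <;>
      simp [Matrix.mul_apply, Fin.sum_univ_two, hM1_00, hM1_10] <;> ring
  have hupper : ∀ c : F, (Pu : GL (Fin 2) F) * Eu c * (Pu : GL (Fin 2) F)⁻¹ ∈ G := by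
    intro c
    have : (Pu : GL (Fin 2) F) * Eu c * (Pu : GL (Fin 2) F)⁻¹
        = y * Eu (c * (M1 : Matrix (Fin 2) (Fin 2) F) 1 1) * y⁻¹ := by
      rw [key1 c, hM1]
      group
    rw [this]
    exact hG1 _
  -- M2 = Pu⁻¹ * (g₁ * y) sends e₁ to e₂
  set M2 : GL (Fin 2) F := (Pu : GL (Fin 2) F)⁻¹ * (g₁ * y) with hM2
  have hM2e : (M2 : Matrix (Fin 2) (Fin 2) F).mulVec e₁ = ![0, 1] := by
    rw [hM2, Units.val_mul, ← Matrix.mulVec_mulVec]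
    have : ((g₁ * y : GL (Fin 2) F) : Matrix (Fin 2) (Fin 2) F).mulVec e₁ = w' := by
      rw [Units.val_mul, ← Matrix.mulVec_mulVec, ← hw, ← hw']
    rw [this, hPinv _ w' hPe₂]
  have hM2_00 : (M2 : Matrix (Fin 2) (Fin 2) F) 0 0 = 0 := by
    have := congrFun hM2e 0
    simpa [Matrix.mulVec, dotProduct, Fin.sum_univ_two, he₁] using this
  have hM2_10 : (M2 : Matrix (Fin 2) (Fin 2) F) 1 0 = 1 := by
    have := congrFun hM2e 1
    simpa [Matrix.mulVec, dotProduct, Fin.sum_univ_two, he₁] using this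
  have key2 : ∀ c : F, Eu' c = M2 * Eu (c * (M2 : Matrix (Fin 2) (Fin 2) F) 0 1) * M2⁻¹ := by
    intro c
    rw [eq_mul_inv_iff_mul_eq]
    refine Units.ext ?_
    simp only [Units.val_mul, Eu'_val, Eu_val]
    ext i j
    fin_cases i <;> fin_cases j <;>
      simp [Matrix.mul_apply, Fin.sum_univ_two, hM2_00, hM2_10] <;> ring
  have hlower : ∀ c : F, (Pu : GL (Fin 2) F) * Eu' c * (Pu : GL (Fin 2) F)⁻¹ ∈ G := by
    intro c
    have heq : (Pu : GL (Fin 2) F) * Eu' c * (Pu : GL (Fin 2) F)⁻¹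
        = g₁ * (y * Eu (c * (M2 : Matrix (Fin 2) (Fin 2) F) 0 1) * y⁻¹) * g₁⁻¹ := by
      rw [key2 c, hM2]
      group
    rw [heq]
    exact mul_mem (mul_mem hg₁ (hG1 _)) (inv_mem hg₁)
  -- conclude
  intro A hdetA
  set B : GL (Fin 2) F := (Pu : GL (Fin 2) F)⁻¹ * A * (Pu : GL (Fin 2) F) with hB
  have hdetB : (B : Matrix (Fin 2) (Fin 2) F).det = 1 := by
    have hinv : (((Pu : GL (Fin 2) F)⁻¹ : GL (Fin 2) F) : Matrix (Fin 2) (Fin 2) F).det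
        * (Pu : Matrix (Fin 2) (Fin 2) F).det = 1 := by
      rw [← Matrix.det_mul, ← Units.val_mul, inv_mul_cancel]
      simp
    rw [hB, Units.val_mul, Units.val_mul, Matrix.det_mul, Matrix.det_mul, hdetA, mul_one]
    rw [mul_comm] at hinv ⊢
    exact hinv
  obtain ⟨u, c, v, d, hdecomp⟩ := dec B hdetB
  have hA : A = ((Pu : GL (Fin 2) F) * Eu u * (Pu : GL (Fin 2) F)⁻¹)
      * (((Pu : GL (Fin 2) F)) * Eu' c * (Pu : GL (Fin 2) F)⁻¹)
      * (((Pu : GL (Fin 2) F)) * Eu v * (Pu : GL (Fin 2) F)⁻¹)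
      * (((Pu : GL (Fin 2) F)) * Eu' d * (Pu : GL (Fin 2) F)⁻¹) := by
    have : A = (Pu : GL (Fin 2) F) * B * (Pu : GL (Fin 2) F)⁻¹ := by
      rw [hB]; group
    rw [this, hdecomp]
    group
  rw [hA]
  exact mul_mem (mul_mem (mul_mem (hupper u) (hlower c)) (hupper v)) (hlower d)
end

section
/- Let q be a power of a prime p and let G be a subgroup of GL₃(𝔽_q) such that G contains a Sylow p-subgroup of GL₃(𝔽_q) and G acts irreducibly on 𝔽_q³. Then SL₃(𝔽_q) ⊆ G. -/
open scoped MatrixGroups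
open Matrix

namespace Statement9Aux

variable {K : Type} [Field K]

lemma vmv_mul_vmv (v φ w ψ : Fin 3 → K) :
    vecMulVec v φ * vecMulVec w ψ = (φ ⬝ᵥ w) • vecMulVec v ψ := by
  ext i j
  simp [Matrix.mul_apply, vecMulVec_apply, dotProduct, Fin.sum_univ_three, Matrix.smul_apply]
  ring

lemma mul_vmv (M : Matrix (Fin 3) (Fin 3) K) (v φ : Fin 3 → K) :
    M * vecMulVec v φ = vecMulVec (M *ᵥ v) φ := by
  ext i j
  simp [Matrix.mul_apply, vecMulVec_apply, mulVec, dotProduct, Fin.sum_univ_three]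
  ring

lemma vmv_mul_mat (M : Matrix (Fin 3) (Fin 3) K) (v φ : Fin 3 → K) :
    vecMulVec v φ * M = vecMulVec v (φ ᵥ* M) := by
  ext i j
  simp [Matrix.mul_apply, vecMulVec_apply, vecMul, dotProduct, Fin.sum_univ_three]
  ring

lemma vmv_mulVec (v φ w : Fin 3 → K) :
    vecMulVec v φ *ᵥ w = (φ ⬝ᵥ w) • v := by
  ext i
  simp [vecMulVec_apply, mulVec, dotProduct, Fin.sum_univ_three]
  ring

/-- The transvection `1 + vecMulVec v φ` as an element of `GL`. -/
def tvu (v φ : Fin 3 → K) (h : φ ⬝ᵥ v = 0) : GL (Fin 3) K where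
  val := 1 + vecMulVec v φ
  inv := 1 - vecMulVec v φ
  val_inv := by
    have : vecMulVec v φ * vecMulVec v φ = 0 := by rw [vmv_mul_vmv, h, zero_smul]
    rw [mul_sub, add_mul, add_mul, this]; simp
  inv_val := by
    have : vecMulVec v φ * vecMulVec v φ = 0 := by rw [vmv_mul_vmv, h, zero_smul]
    rw [sub_mul, mul_add, mul_add, this]; simp

@[simp] lemma tvu_val (v φ : Fin 3 → K) (h : φ ⬝ᵥ v = 0) :
    (tvu v φ h : Matrix (Fin 3) (Fin 3) K) = 1 + vecMulVec v φ := rfl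

/-- `v` is good if `G` contains all transvections with direction `v`. -/
def Good (G : Subgroup (GL (Fin 3) K)) (v : Fin 3 → K) : Prop :=
  ∀ φ : Fin 3 → K, φ ⬝ᵥ v = 0 → ∀ A : GL (Fin 3) K,
    (A : Matrix (Fin 3) (Fin 3) K) = 1 + vecMulVec v φ → A ∈ G

variable {G : Subgroup (GL (Fin 3) K)}

lemma Good.tvu_mem {v : Fin 3 → K} (hv : Good G v) (φ : Fin 3 → K) (h : φ ⬝ᵥ v = 0) :
    tvu v φ h ∈ G := hv φ h _ rfl

lemma good_zero : Good G 0 := by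
  intro φ hφ A hA
  have : A = 1 := by
    apply Units.ext
    rw [hA]
    have : vecMulVec (0 : Fin 3 → K) φ = 0 := by ext i j; simp [vecMulVec_apply]
    rw [this, add_zero, Units.val_one]
  rw [this]; exact one_mem G

lemma good_smul (c : K) {v : Fin 3 → K} (hv : Good G v) : Good G (c • v) := by
  rcases eq_or_ne c 0 with rfl | hc
  · rw [zero_smul]; exact good_zero
  · intro φ hφ A hA
    have h1 : φ ⬝ᵥ v = 0 := by
      have h0 : c * (φ ⬝ᵥ v) = 0 := by
        simpa [dotProduct, Finset.mul_sum, mul_comm, mul_left_comm] using hφ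
      exact (mul_eq_zero.1 h0).resolve_left hc
    have h2 : (c • φ) ⬝ᵥ v = 0 := by
      simp [dotProduct, Pi.smul_apply, smul_eq_mul, mul_assoc, ← Finset.mul_sum]
      right
      simpa [dotProduct] using h1
    refine hv (c • φ) h2 A ?_
    rw [hA]
    congr 1
    ext i j
    simp [vecMulVec_apply, Pi.smul_apply, smul_eq_mul]
    ring

lemma conj_val (x A : GL (Fin 3) K) :
    ((x * A * x⁻¹ : GL (Fin 3) K) : Matrix (Fin 3) (Fin 3) K)
      = (x : Matrix (Fin 3) (Fin 3) K) * (A : Matrix (Fin 3) (Fin 3) K)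
        * ((x⁻¹ : GL (Fin 3) K) : Matrix (Fin 3) (Fin 3) K) := by
  simp [Units.val_mul]

lemma conj_tvu_val (x : GL (Fin 3) K) (v χ : Fin 3 → K) (h : χ ⬝ᵥ v = 0) :
    ((x * tvu v χ h * x⁻¹ : GL (Fin 3) K) : Matrix (Fin 3) (Fin 3) K)
      = 1 + vecMulVec ((x : Matrix (Fin 3) (Fin 3) K) *ᵥ v)
          (χ ᵥ* ((x⁻¹ : GL (Fin 3) K) : Matrix (Fin 3) (Fin 3) K)) := by
  rw [conj_val, tvu_val, mul_add, add_mul, mul_vmv, vmv_mul_mat]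
  have : (x : Matrix (Fin 3) (Fin 3) K) * ((x⁻¹ : GL (Fin 3) K) : Matrix (Fin 3) (Fin 3) K) = 1 := by
    rw [← Units.val_mul, mul_inv_cancel, Units.val_one]
  rw [mul_one, this]

lemma good_conj {x : GL (Fin 3) K} (hx : x ∈ G) {v : Fin 3 → K} (hv : Good G v) :
    Good G ((x : Matrix (Fin 3) (Fin 3) K) *ᵥ v) := by
  intro φ hφ A hA
  set χ : Fin 3 → K := φ ᵥ* (x : Matrix (Fin 3) (Fin 3) K) with hχdef
  have hχ : χ ⬝ᵥ v = 0 := by rw [hχdef, ← dotProduct_mulVec, hφ]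
  have hmem : x * tvu v χ hχ * x⁻¹ ∈ G := mul_mem (mul_mem hx (hv.tvu_mem χ hχ)) (inv_mem hx)
  have hback : χ ᵥ* ((x⁻¹ : GL (Fin 3) K) : Matrix (Fin 3) (Fin 3) K) = φ := by
    rw [hχdef, vecMul_vecMul, ← Units.val_mul, mul_inv_cancel, Units.val_one, vecMul_one]
  have hval : A = x * tvu v χ hχ * x⁻¹ := by
    apply Units.ext
    rw [conj_tvu_val, hback, hA]
  rw [hval]; exact hmem


lemma good_add {v w : Fin 3 → K} (hv : Good G v) (hw : Good G w) : Good G (v + w) := by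
  by_cases hdep : ∃ c : K, w = c • v
  · obtain ⟨c, rfl⟩ := hdep
    have : v + c • v = (1 + c) • v := by rw [add_smul, one_smul]
    rw [this]
    exact good_smul _ hv
  · have hw' : w ∉ Submodule.span K {v} := by
      intro hmem
      obtain ⟨a, ha⟩ := Submodule.mem_span_singleton.1 hmem
      exact hdep ⟨a, ha.symm⟩
    obtain ⟨f, hf0, hfbot⟩ := Submodule.exists_dual_map_eq_bot_of_notMem hw' inferInstance
    have hfv : f v = 0 := by
      have : f v ∈ (Submodule.span K {v}).map f :=
        Submodule.mem_map_of_mem (Submodule.mem_span_singleton_self v)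
      rw [hfbot] at this
      exact this
    set ψ : Fin 3 → K := fun i => (f w)⁻¹ * f (Pi.single i 1) with hψdef
    have hdot : ∀ u : Fin 3 → K, ψ ⬝ᵥ u = (f w)⁻¹ * f u := by
      intro u
      have hu : u = u 0 • (Pi.single 0 1 : Fin 3 → K) + u 1 • (Pi.single 1 1 : Fin 3 → K)
          + u 2 • (Pi.single 2 1 : Fin 3 → K) := by
        ext i; fin_cases i <;> simp [Pi.single_apply]
      rw [hu]
      simp only [dotProduct, Fin.sum_univ_three, map_add, _root_.map_smul, hψdef]
      simp [Pi.single_apply, smul_eq_mul]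
      ring
    have hψv : ψ ⬝ᵥ v = 0 := by rw [hdot, hfv, mul_zero]
    have hψw : ψ ⬝ᵥ w = 1 := by rw [hdot, inv_mul_cancel₀ hf0]
    have hgmem : tvu v ψ hψv ∈ G := hv.tvu_mem ψ hψv
    have hmv : ((tvu v ψ hψv : GL (Fin 3) K) : Matrix (Fin 3) (Fin 3) K) *ᵥ w = v + w := by
      rw [tvu_val, add_mulVec, one_mulVec, vmv_mulVec, hψw, one_smul, add_comm]
    have := good_conj hgmem hw
    rwa [hmv] at this

lemma all_good
    (hirr : ∀ W : Submodule K (Fin 3 → K),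
      (∀ A ∈ G, ∀ v ∈ W, (A : Matrix (Fin 3) (Fin 3) K).mulVec v ∈ W) → W = ⊥ ∨ W = ⊤)
    (u : Fin 3 → K) (hu : u ≠ 0) (hgu : Good G u) (v : Fin 3 → K) : Good G v := by
  let S : Submodule K (Fin 3 → K) :=
    { carrier := {v | Good G v}
      add_mem' := fun hv hw => good_add hv hw
      zero_mem' := good_zero
      smul_mem' := fun c v hv => good_smul c hv }
  have hS := hirr S (fun A hA v hv => good_conj hA hv)
  rcases hS with hbot | htop
  · exfalso
    have : u ∈ S := hgu
    rw [hbot] at this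
    exact hu this
  · have : v ∈ S := by rw [htop]; trivial
    exact this


/-- Upper unitriangular predicate. -/
def UT (M : Matrix (Fin 3) (Fin 3) K) : Prop :=
  M 0 0 = 1 ∧ M 1 1 = 1 ∧ M 2 2 = 1 ∧ M 1 0 = 0 ∧ M 2 0 = 0 ∧ M 2 1 = 0

/-- The group of upper unitriangular matrices. -/
def UTgrp : Subgroup (GL (Fin 3) K) where
  carrier := {A | UT (A : Matrix (Fin 3) (Fin 3) K)}
  one_mem' := by
    refine ⟨?_, ?_, ?_, ?_, ?_, ?_⟩ <;> simp [Matrix.one_apply]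
  mul_mem' := by
    rintro A B ⟨a1, a2, a3, a4, a5, a6⟩ ⟨b1, b2, b3, b4, b5, b6⟩
    refine ⟨?_, ?_, ?_, ?_, ?_, ?_⟩ <;>
      simp [Units.val_mul, Matrix.mul_apply, Fin.sum_univ_three, a1, a2, a3, a4, a5, a6,
        b1, b2, b3, b4, b5, b6]
  inv_mem' := by
    rintro A ⟨a1, a2, a3, a4, a5, a6⟩
    have h : ∀ i j, ((A : Matrix (Fin 3) (Fin 3) K) * ((A⁻¹ : GL (Fin 3) K) : Matrix (Fin 3) (Fin 3) K)) i j = (1 : Matrix (Fin 3) (Fin 3) K) i j := by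
      intro i j
      rw [← Units.val_mul, mul_inv_cancel, Units.val_one]
    set B := ((A⁻¹ : GL (Fin 3) K) : Matrix (Fin 3) (Fin 3) K) with hB
    have e20 := h 2 0
    simp [Matrix.mul_apply, Fin.sum_univ_three, a1, a2, a3, a4, a5, a6, Matrix.one_apply] at e20
    have e10 := h 1 0
    simp [Matrix.mul_apply, Fin.sum_univ_three, a1, a2, a3, a4, a5, a6, e20, Matrix.one_apply] at e10
    have e21 := h 2 1
    simp [Matrix.mul_apply, Fin.sum_univ_three, a1, a2, a3, a4, a5, a6, Matrix.one_apply] at e21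
    have e00 := h 0 0
    simp [Matrix.mul_apply, Fin.sum_univ_three, a1, a2, a3, a4, a5, a6, e10, e20, Matrix.one_apply] at e00
    have e11 := h 1 1
    simp [Matrix.mul_apply, Fin.sum_univ_three, a1, a2, a3, a4, a5, a6, e21, Matrix.one_apply] at e11
    have e22 := h 2 2
    simp [Matrix.mul_apply, Fin.sum_univ_three, a1, a2, a3, a4, a5, a6, Matrix.one_apply] at e22
    exact ⟨e00, e11, e22, e10, e20, e21⟩

lemma strict_upper_cube (N : Matrix (Fin 3) (Fin 3) K)
    (h1 : N 0 0 = 0) (h2 : N 1 1 = 0) (h3 : N 2 2 = 0)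
    (h4 : N 1 0 = 0) (h5 : N 2 0 = 0) (h6 : N 2 1 = 0) :
    N * N * N = 0 := by
  ext i j
  fin_cases i <;> fin_cases j <;>
    simp [Matrix.mul_apply, Fin.sum_univ_three, h1, h2, h3, h4, h5, h6]

lemma strict_upper_pow {N : Matrix (Fin 3) (Fin 3) K} (h : N * N * N = 0)
    {k : ℕ} (hk : 3 ≤ k) : N ^ k = 0 := by
  have : N ^ k = N ^ 3 * N ^ (k - 3) := by rw [← pow_add]; congr 1; omega
  rw [this, pow_succ, pow_succ, pow_one, h, zero_mul]

lemma UT_pow_eq_one {p : ℕ} (hp : p.Prime) (hchar : CharP K p)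
    (A : GL (Fin 3) K) (hA : UT (A : Matrix (Fin 3) (Fin 3) K)) :
    A ^ (p ^ 2) = 1 := by
  obtain ⟨a1, a2, a3, a4, a5, a6⟩ := hA
  set M := (A : Matrix (Fin 3) (Fin 3) K) with hM
  set N := M - 1 with hN
  have hMN : M = N + 1 := by rw [hN]; abel
  have hcube : N * N * N = 0 := by
    apply strict_upper_cube <;> simp [hN, Matrix.sub_apply, Matrix.one_apply, a1, a2, a3, a4, a5, a6]
  have hpow : M ^ (p ^ 2) = 1 := by
    rw [hMN, (Commute.one_right N).add_pow]
    rw [Finset.sum_eq_single 0]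
    · simp
    · intro k hk hk0
      rcases lt_or_ge k 3 with hk3 | hk3
      · haveI := hchar
        haveI : CharP (Matrix (Fin 3) (Fin 3) K) p := inferInstance
        have hdvd : p ∣ (p ^ 2).choose k := by
          apply hp.dvd_choose_pow hk0
          intro hkp
          have h2 := hp.two_le
          nlinarith [hkp ▸ hk3]
        have hcast : (((p ^ 2).choose k : ℕ) : Matrix (Fin 3) (Fin 3) K) = 0 :=
          (CharP.cast_eq_zero_iff _ p _).mpr hdvd
        rw [hcast, mul_zero]
      · rw [strict_upper_pow hcube hk3, zero_mul, zero_mul]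
    · intro h; exact absurd (Finset.mem_range.2 (by positivity)) h
  apply Units.ext
  rw [Units.val_pow_eq_pow_val, ← hM, hpow, Units.val_one]


lemma UTgrp_isPGroup {p : ℕ} (hp : p.Prime) (hchar : CharP K p) :
    IsPGroup p (UTgrp : Subgroup (GL (Fin 3) K)) := by
  intro g
  refine ⟨2, ?_⟩
  have h := UT_pow_eq_one hp hchar (g : GL (Fin 3) K) g.2
  ext : 1
  push_cast
  rw [h]

lemma char_eq {p : ℕ} (hp : p.Prime) [Fintype K] (n : ℕ) (hcard : Fintype.card K = p ^ n) :
    CharP K p := by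
  obtain ⟨m, hprime, hcardr⟩ := FiniteField.card K (ringChar K)
  have hn : n ≠ 0 := by
    intro h
    rw [h, pow_zero] at hcard
    exact absurd hcard (Nat.ne_of_gt Fintype.one_lt_card)
  have hdvd : ringChar K ∣ p ^ n := by
    rw [← hcard, hcardr]
    exact dvd_pow_self _ (by positivity)
  have : ringChar K = p := by
    have := hprime.dvd_of_dvd_pow hdvd
    exact (Nat.prime_dvd_prime_iff_eq hprime hp).mp this
  rw [← this]
  infer_instance


lemma t01 (c : K) : transvection (0:Fin 3) 1 c = !![1,c,0;0,1,0;0,0,1] := by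
  ext i j
  fin_cases i <;> fin_cases j <;>
    simp [Matrix.transvection, Matrix.single, Matrix.one_apply,
      Matrix.vecHead, Matrix.vecTail]

lemma t10 (c : K) : transvection (1:Fin 3) 0 c = !![1,0,0;c,1,0;0,0,1] := by
  ext i j
  fin_cases i <;> fin_cases j <;>
    simp [Matrix.transvection, Matrix.single, Matrix.one_apply,
      Matrix.vecHead, Matrix.vecTail]

lemma t12 (c : K) : transvection (1:Fin 3) 2 c = !![1,0,0;0,1,c;0,0,1] := by
  ext i j
  fin_cases i <;> fin_cases j <;>
    simp [Matrix.transvection, Matrix.single, Matrix.one_apply,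
      Matrix.vecHead, Matrix.vecTail]

lemma t21 (c : K) : transvection (2:Fin 3) 1 c = !![1,0,0;0,1,0;0,c,1] := by
  ext i j
  fin_cases i <;> fin_cases j <;>
    simp [Matrix.transvection, Matrix.single, Matrix.one_apply,
      Matrix.vecHead, Matrix.vecTail]

lemma diag3 (a b c : K) : diagonal ![a,b,c] = !![a,0,0;0,b,0;0,0,c] := by
  ext i j
  fin_cases i <;> fin_cases j <;> simp [Matrix.diagonal, Matrix.vecHead, Matrix.vecTail]

lemma block01 (a : K) (ha : a ≠ 0) :
    transvection (0:Fin 3) 1 a * transvection 1 0 (-a⁻¹) * transvection 0 1 a *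
      transvection 0 1 (-1) * transvection 1 0 1 * transvection 0 1 (-1)
      = diagonal ![a, a⁻¹, (1:K)] := by
  simp only [t01, t10, diag3]
  simp only [Matrix.mul_fin_three]
  norm_num
  simp [ha]

lemma block12 (a : K) (ha : a ≠ 0) :
    transvection (1:Fin 3) 2 a * transvection 2 1 (-a⁻¹) * transvection 1 2 a *
      transvection 1 2 (-1) * transvection 2 1 1 * transvection 1 2 (-1)
      = diagonal ![(1:K), a, a⁻¹] := by
  simp only [t12, t21, diag3]
  simp only [Matrix.mul_fin_three]
  norm_num
  simp [ha]


/-- Matrices realized by elements of `G`. -/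
def Pm (G : Subgroup (GL (Fin 3) K)) (M : Matrix (Fin 3) (Fin 3) K) : Prop :=
  ∃ B ∈ G, (B : Matrix (Fin 3) (Fin 3) K) = M

lemma Pm.mul {M N : Matrix (Fin 3) (Fin 3) K} (hM : Pm G M) (hN : Pm G N) : Pm G (M * N) := by
  obtain ⟨B1, hB1, e1⟩ := hM
  obtain ⟨B2, hB2, e2⟩ := hN
  exact ⟨B1 * B2, mul_mem hB1 hB2, by rw [Units.val_mul, e1, e2]⟩

lemma dot_single_single {i j : Fin 3} (hij : i ≠ j) (c : K) :
    (Pi.single j c : Fin 3 → K) ⬝ᵥ (Pi.single i 1 : Fin 3 → K) = 0 := by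
  rw [dotProduct]
  apply Finset.sum_eq_zero
  intro k _
  rcases eq_or_ne k i with rfl | hk
  · simp [Pi.single_apply, hij.symm]
  · simp [Pi.single_apply, hk]

lemma single_vmv (i j : Fin 3) (hij : i ≠ j) (c : K) :
    (1 : Matrix (Fin 3) (Fin 3) K) + vecMulVec (Pi.single i 1) (Pi.single j c)
      = transvection i j c := by
  ext a b
  rw [Matrix.add_apply, Matrix.transvection, Matrix.add_apply]
  congr 1
  rw [vecMulVec_apply]
  rcases eq_or_ne a i with rfl | ha
  · rcases eq_or_ne b j with rfl | hb
    · simp [Pi.single_apply, Matrix.single]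
    · simp [Pi.single_apply, Matrix.single, hb, Ne.symm hb]
  · simp [Pi.single_apply, Matrix.single, ha, Ne.symm ha]

lemma good_transvection (hgood : ∀ v, Good G v) {i j : Fin 3} (hij : i ≠ j) (c : K) :
    Pm G (transvection i j c) := by
  have hdot := dot_single_single hij c
  exact ⟨tvu _ _ hdot, (hgood _) _ hdot _ rfl, by rw [tvu_val, single_vmv i j hij c]⟩

lemma Pm_one : Pm G (1 : Matrix (Fin 3) (Fin 3) K) := ⟨1, one_mem G, rfl⟩

lemma Pm_list (hgood : ∀ v, Good G v) (L : List (TransvectionStruct (Fin 3) K)) :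
    Pm G ((L.map TransvectionStruct.toMatrix).prod) := by
  induction L with
  | nil => simpa using Pm_one
  | cons t L ih =>
      rw [List.map_cons, List.prod_cons]
      exact Pm.mul (by rcases t with ⟨i, j, hij, c⟩; exact good_transvection hgood hij c) ih

lemma Pm_diagonal (hgood : ∀ v, Good G v) (D : Fin 3 → K) (hD : D 0 * D 1 * D 2 = 1) :
    Pm G (diagonal D) := by
  have h0 : D 0 ≠ 0 := by intro h; rw [h] at hD; simp at hD
  have h1 : D 1 ≠ 0 := by intro h; rw [h] at hD; simp at hD
  have h01 : D 0 * D 1 ≠ 0 := mul_ne_zero h0 h1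
  have hfun : D = ![D 0, (D 0)⁻¹, (1:K)] * ![(1:K), D 0 * D 1, (D 0 * D 1)⁻¹] := by
    funext i
    fin_cases i
    · simp
    · show D 1 = ![D 0, (D 0)⁻¹, (1:K)] 1 * ![(1:K), D 0 * D 1, (D 0 * D 1)⁻¹] 1
      simp only [Pi.mul_apply, Matrix.cons_val_one, Matrix.head_cons, Matrix.cons_val_zero]
      field_simp
    · show D 2 = ![D 0, (D 0)⁻¹, (1:K)] 2 * ![(1:K), D 0 * D 1, (D 0 * D 1)⁻¹] 2
      simp only [Matrix.cons_val_two, Matrix.tail_cons, Matrix.head_cons, one_mul]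
      field_simp
      linear_combination hD
  have key : diagonal D
      = diagonal ![D 0, (D 0)⁻¹, (1:K)] * diagonal ![(1:K), D 0 * D 1, (D 0 * D 1)⁻¹] :=
    (congrArg diagonal hfun).trans (diagonal_mul_diagonal _ _).symm
  rw [key, ← block01 _ h0, ← block12 _ h01]
  refine Pm.mul (Pm.mul (Pm.mul (Pm.mul (Pm.mul (Pm.mul ?_ ?_) ?_) ?_) ?_) ?_)
    (Pm.mul (Pm.mul (Pm.mul (Pm.mul (Pm.mul ?_ ?_) ?_) ?_) ?_) ?_) <;>
    exact good_transvection hgood (by decide) _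

lemma mem_of_good (hgood : ∀ v, Good G v) (A : GL (Fin 3) K)
    (hdet : (A : Matrix (Fin 3) (Fin 3) K).det = 1) : A ∈ G := by
  obtain ⟨L, L', D, hM⟩ :=
    Matrix.Pivot.exists_list_transvec_mul_mul_list_transvec_eq_diagonal
      (A : Matrix (Fin 3) (Fin 3) K)
  have hdetD : D 0 * D 1 * D 2 = 1 := by
    have h := congrArg Matrix.det hM
    rw [Matrix.det_mul, Matrix.det_mul, Matrix.TransvectionStruct.det_toMatrix_prod,
      Matrix.TransvectionStruct.det_toMatrix_prod, hdet, Matrix.det_diagonal,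
      Fin.prod_univ_three] at h
    rw [← h]; ring
  obtain ⟨B1, hB1, e1⟩ := Pm_list hgood L
  obtain ⟨B2, hB2, e2⟩ := Pm_list hgood L'
  obtain ⟨B3, hB3, e3⟩ := Pm_diagonal hgood D hdetD
  have hconj : B1 * A * B2 = B3 := by
    apply Units.ext
    rw [Units.val_mul, Units.val_mul, e1, e2, e3, hM]
  have hA : A = B1⁻¹ * B3 * B2⁻¹ := by rw [← hconj]; group
  rw [hA]
  exact mul_mem (mul_mem (inv_mem hB1) hB3) (inv_mem hB2)

end Statement9Aux

open scoped Pointwise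
open Statement9Aux

theorem statement9 (p q : ℕ) (hp : p.Prime) (hq : ∃ n : ℕ, q = p ^ n)
    (K : Type) [Field K] [Fintype K] (hcard : Fintype.card K = q)
    (G : Subgroup (GL (Fin 3) K))
    -- `G` contains a Sylow `p`-subgroup of `GL₃(𝔽_q)`
    (hsyl : ∃ Q : Sylow p (GL (Fin 3) K), (Q : Subgroup (GL (Fin 3) K)) ≤ G)
    -- `G` acts irreducibly on `𝔽_q³`
    (hirr : ∀ W : Submodule K (Fin 3 → K),
      (∀ A ∈ G, ∀ v ∈ W, (A : Matrix (Fin 3) (Fin 3) K).mulVec v ∈ W) → W = ⊥ ∨ W = ⊤) :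
    -- `SL₃(𝔽_q) ⊆ G`
    ∀ A : GL (Fin 3) K, (A : Matrix (Fin 3) (Fin 3) K).det = 1 → A ∈ G := by
  intro A hdet
  haveI : Fact p.Prime := ⟨hp⟩
  obtain ⟨n, rfl⟩ := hq
  have hchar : CharP K p := char_eq hp n hcard
  obtain ⟨Q, hQG⟩ := hsyl
  obtain ⟨Q'', hUQ⟩ := (UTgrp_isPGroup hp hchar).exists_le_sylow
  obtain ⟨x, hx⟩ := MulAction.exists_smul_eq (GL (Fin 3) K) Q'' Q
  have hconj : ∀ B : GL (Fin 3) K, B ∈ (UTgrp : Subgroup (GL (Fin 3) K)) →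
      x * B * x⁻¹ ∈ G := by
    intro B hB
    have h1 : MulAut.conj x B ∈ MulAut.conj x • (Q'' : Subgroup (GL (Fin 3) K)) :=
      Subgroup.smul_mem_pointwise_smul _ _ _ (hUQ hB)
    rw [← Sylow.coe_subgroup_smul, hx] at h1
    exact hQG (by simpa [MulAut.conj_apply] using h1)
  set e1 : Fin 3 → K := Pi.single 0 1 with he1
  set u : Fin 3 → K := (x : Matrix (Fin 3) (Fin 3) K) *ᵥ e1 with hu_def
  have hu : u ≠ 0 := by
    intro h
    have h2 := congrArg (fun w => ((x⁻¹ : GL (Fin 3) K) : Matrix (Fin 3) (Fin 3) K) *ᵥ w) h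
    simp only [hu_def, Matrix.mulVec_mulVec, Matrix.mulVec_zero] at h2
    rw [← Units.val_mul, inv_mul_cancel, Units.val_one, Matrix.one_mulVec] at h2
    have := congrFun h2 0
    simp [he1] at this
  have hgu : Good G u := by
    intro φ hφ A' hA'
    rw [hu_def, Matrix.dotProduct_mulVec] at hφ
    set χ : Fin 3 → K := φ ᵥ* (x : Matrix (Fin 3) (Fin 3) K) with hχdef
    have hχ0 : χ 0 = 0 := by
      have : χ ⬝ᵥ e1 = χ 0 := by simp [he1, dotProduct, Fin.sum_univ_three, Pi.single_apply]
      rw [← this]; exact hφ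
    have hχ : χ ⬝ᵥ e1 = 0 := hφ
    have hBU : tvu e1 χ hχ ∈ (UTgrp : Subgroup (GL (Fin 3) K)) := by
      refine ⟨?_, ?_, ?_, ?_, ?_, ?_⟩ <;>
        simp [tvu_val, Matrix.add_apply, Matrix.one_apply, vecMulVec_apply, he1,
          Pi.single_apply, hχ0]
    have hmem : x * tvu e1 χ hχ * x⁻¹ ∈ G := hconj _ hBU
    have hback : χ ᵥ* ((x⁻¹ : GL (Fin 3) K) : Matrix (Fin 3) (Fin 3) K) = φ := by
      rw [hχdef, Matrix.vecMul_vecMul, ← Units.val_mul, mul_inv_cancel, Units.val_one,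
        Matrix.vecMul_one]
    have hval : A' = x * tvu e1 χ hχ * x⁻¹ := by
      apply Units.ext
      rw [conj_tvu_val, hback, hA', hu_def]
    rw [hval]; exact hmem
  exact mem_of_good (all_good hirr u hu hgu) A hdet
end

section
/- Let q ≥ 4 be a power of a prime p. Let G be a subgroup of GL₂(𝔽_q) such that: (i) the determinant map sends G onto 𝔽_q^×; (ii) G acts irreducibly on 𝔽_q²; and (iii) q divides |G|. Then G = GL₂(𝔽_q). -/
open scoped MatrixGroups

set_option linter.unreachableTactic false
set_option linter.unusedTactic false
set_option linter.unnecessarySeqFocus false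

namespace St11
open Matrix
variable {K : Type} [Field K]

def E12 (c : K) : GL (Fin 2) K :=
  ⟨!![1, c; 0, 1], !![1, -c; 0, 1],
   by ext i j; fin_cases i <;> fin_cases j <;> simp [Matrix.mul_apply, Fin.sum_univ_two],
   by ext i j; fin_cases i <;> fin_cases j <;> simp [Matrix.mul_apply, Fin.sum_univ_two]⟩

def E21 (c : K) : GL (Fin 2) K :=
  ⟨!![1, 0; c, 1], !![1, 0; -c, 1],
   by ext i j; fin_cases i <;> fin_cases j <;> simp [Matrix.mul_apply, Fin.sum_univ_two],
   by ext i j; fin_cases i <;> fin_cases j <;> simp [Matrix.mul_apply, Fin.sum_univ_two]⟩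

@[simp] lemma E12_val (c : K) : (E12 c : Matrix (Fin 2) (Fin 2) K) = !![1, c; 0, 1] := rfl
@[simp] lemma E21_val (c : K) : (E21 c : Matrix (Fin 2) (Fin 2) K) = !![1, 0; c, 1] := rfl

lemma ext2 {A B : Matrix (Fin 2) (Fin 2) K}
    (h0 : A.mulVec (Pi.single 0 1) = B.mulVec (Pi.single 0 1))
    (h1 : A.mulVec (Pi.single 1 1) = B.mulVec (Pi.single 1 1)) : A = B := by
  ext i j
  fin_cases j
  · simpa [Matrix.mulVec_single] using congrFun h0 i
  · simpa [Matrix.mulVec_single] using congrFun h1 i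

lemma mem_gen_aux (H : Subgroup (GL (Fin 2) K))
    (h12 : ∀ c : K, E12 c ∈ H) (h21 : ∀ c : K, E21 c ∈ H)
    (M : GL (Fin 2) K) (hd : (M : Matrix (Fin 2) (Fin 2) K).det = 1)
    (hc : (M : Matrix (Fin 2) (Fin 2) K) 1 0 ≠ 0) : M ∈ H := by
  set a := (M : Matrix (Fin 2) (Fin 2) K) 0 0 with ha
  set b := (M : Matrix (Fin 2) (Fin 2) K) 0 1 with hb
  set c := (M : Matrix (Fin 2) (Fin 2) K) 1 0 with hcdef
  set d := (M : Matrix (Fin 2) (Fin 2) K) 1 1 with hdd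
  have hrel : a * d - b * c = 1 := by rw [ha, hb, hcdef, hdd, ← Matrix.det_fin_two, hd]
  have key : M = E12 ((a-1)/c) * E21 c * E12 ((d-1)/c) := by
    apply Units.ext
    show (M : Matrix (Fin 2) (Fin 2) K) = _
    have : ((E12 ((a-1)/c) * E21 c * E12 ((d-1)/c) : GL (Fin 2) K) : Matrix (Fin 2) (Fin 2) K)
        = !![1, (a-1)/c; 0, 1] * !![1, 0; c, 1] * !![1, (d-1)/c; 0, 1] := rfl
    rw [this]
    ext i j
    fin_cases i <;> fin_cases j <;>
      simp [Matrix.mul_apply, Fin.sum_univ_two, ← ha, ← hb, ← hdd] <;> (try field_simp) <;> first | rfl | linear_combination hrel | linear_combination -hrel | linear_combination 2*hrel | linear_combination -2*hrel | linear_combination c*hrel | linear_combination -c*hrel | ring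
  rw [key]
  exact mul_mem (mul_mem (h12 _) (h21 _)) (h12 _)

lemma mem_gen (H : Subgroup (GL (Fin 2) K))
    (h12 : ∀ c : K, E12 c ∈ H) (h21 : ∀ c : K, E21 c ∈ H)
    (M : GL (Fin 2) K) (hd : (M : Matrix (Fin 2) (Fin 2) K).det = 1) : M ∈ H := by
  by_cases hc : (M : Matrix (Fin 2) (Fin 2) K) 1 0 ≠ 0
  · exact mem_gen_aux H h12 h21 M hd hc
  push_neg at hc
  have hd' : ((M * E21 1 : GL (Fin 2) K) : Matrix (Fin 2) (Fin 2) K).det = 1 := by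
    show ((M : Matrix (Fin 2) (Fin 2) K) * (E21 (1:K) : Matrix (Fin 2) (Fin 2) K)).det = 1
    rw [Matrix.det_mul, hd]
    simp [Matrix.det_fin_two]
  have hdd : (M : Matrix (Fin 2) (Fin 2) K) 1 1 ≠ 0 := by
    intro h0
    rw [Matrix.det_fin_two, h0, hc] at hd
    simp at hd
  have hc' : ((M * E21 1 : GL (Fin 2) K) : Matrix (Fin 2) (Fin 2) K) 1 0 ≠ 0 := by
    show ((M : Matrix (Fin 2) (Fin 2) K) * (E21 (1:K) : Matrix (Fin 2) (Fin 2) K)) 1 0 ≠ 0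
    simpa [Matrix.mul_apply, Fin.sum_univ_two, hc] using hdd
  have h1 : M * E21 1 ∈ H := mem_gen_aux H h12 h21 (M * E21 1) hd' hc'
  have : M = (M * E21 1) * (E21 1)⁻¹ := by group
  rw [this]
  exact mul_mem h1 (inv_mem (h21 1))


end St11

open Matrix St11 in
theorem statement11 (p q : ℕ) (hp : p.Prime) (hq : ∃ n : ℕ, q = p ^ n) (hq4 : 4 ≤ q)
    (K : Type) [Field K] [Fintype K] (hcard : Fintype.card K = q)
    (G : Subgroup (GL (Fin 2) K))
    -- (i) the determinant map sends `G` onto `𝔽_q^×`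
    (hdet : ∀ u : Kˣ, ∃ A ∈ G, Matrix.GeneralLinearGroup.det A = u)
    -- (ii) `G` acts irreducibly on `𝔽_q²`
    (hirr : ∀ W : Submodule K (Fin 2 → K),
      (∀ A ∈ G, ∀ v ∈ W, (A : Matrix (Fin 2) (Fin 2) K).mulVec v ∈ W) → W = ⊥ ∨ W = ⊤)
    -- (iii) `q` divides `|G|`
    (hord : q ∣ Nat.card G) :
    G = ⊤ := by
  classical
  haveI : Fact p.Prime := ⟨hp⟩
  obtain ⟨n, rfl⟩ := hq
  have hn : n ≠ 0 := by rintro rfl; norm_num at hq4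
  -- Step 1 : a p-subgroup Q of GL with q ∣ card Q and Q ≤ G
  obtain ⟨P⟩ : Nonempty (Sylow p G) := inferInstance
  have hGpos : Nat.card G ≠ 0 := Nat.card_pos.ne'
  have hPcard : p ^ n ∣ Nat.card P := by
    rw [Sylow.card_eq_multiplicity]
    exact pow_dvd_pow p ((hp.pow_dvd_iff_le_factorization hGpos).mp hord)
  set Q : Subgroup (GL (Fin 2) K) := Subgroup.map G.subtype P.toSubgroup with hQdef
  have hQle : Q ≤ G := Subgroup.map_subtype_le _
  have hQcard : p ^ n ∣ Nat.card Q := by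
    rwa [Nat.card_congr (Subgroup.equivMapOfInjective P.toSubgroup G.subtype
      G.subtype_injective).toEquiv.symm]
  have hQpow : ∀ T ∈ Q, ∃ k, T ^ p ^ k = 1 := by
    rintro T ⟨x, hxP, rfl⟩
    obtain ⟨k, hk⟩ := P.2 ⟨x, hxP⟩
    refine ⟨k, ?_⟩
    have := congrArg (Subtype.val ∘ Subtype.val) hk
    simpa using this
  -- Step 2 : Q has a nonzero fixed vector
  letI actGL : MulAction (GL (Fin 2) K) {v : Fin 2 → K // v ≠ 0} :=
    { smul := fun g v => ⟨((g : GL (Fin 2) K) : Matrix (Fin 2) (Fin 2) K).mulVec v.1, by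
        intro h0
        have h1 : ((g⁻¹ : GL (Fin 2) K) : Matrix (Fin 2) (Fin 2) K) *
            ((g : GL (Fin 2) K) : Matrix (Fin 2) (Fin 2) K) = 1 := by
          rw [← Units.val_mul, inv_mul_cancel, Units.val_one]
        have := congrArg (fun M : Matrix (Fin 2) (Fin 2) K => M.mulVec v.1) h1
        simp only [← Matrix.mulVec_mulVec, h0, Matrix.mulVec_zero, Matrix.one_mulVec] at this
        exact v.2 this.symm⟩
      one_smul := fun v => Subtype.ext (show ((1 : GL (Fin 2) K) :
          Matrix (Fin 2) (Fin 2) K).mulVec v.1 = v.1 by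
        simp [Matrix.one_mulVec])
      mul_smul := fun g g' v => Subtype.ext (show ((g * g' : GL (Fin 2) K) :
            Matrix (Fin 2) (Fin 2) K).mulVec v.1 =
            (g : Matrix (Fin 2) (Fin 2) K).mulVec ((g' : Matrix (Fin 2) (Fin 2) K).mulVec v.1) by
        rw [Units.val_mul, Matrix.mulVec_mulVec]) }
  have hpn2 : ¬ p ∣ Nat.card {v : Fin 2 → K // v ≠ 0} := by
    have hcS : Nat.card {v : Fin 2 → K // v ≠ 0} = (p ^ n) ^ 2 - 1 := by
      rw [Nat.card_eq_fintype_card, Fintype.card_subtype_compl, Fintype.card_subtype_eq,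
        Fintype.card_fun, hcard]
      simp [pow_mul']
    rw [hcS]
    intro hdvd
    have h1 : (1:ℕ) ≤ (p ^ n) ^ 2 := Nat.one_le_pow _ _ (by positivity)
    have h2 : p ∣ (p ^ n) ^ 2 := dvd_pow (dvd_pow_self p hn) two_ne_zero
    have := Nat.dvd_sub h2 hdvd
    rw [Nat.sub_sub_self h1] at this
    exact hp.one_lt.ne' (Nat.dvd_one.mp this)
  have hQp : IsPGroup p Q := by
    rintro ⟨T, hT⟩
    obtain ⟨k, hk⟩ := hQpow T hT
    exact ⟨k, Subtype.ext (by simpa using hk)⟩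
  obtain ⟨⟨v, hv0⟩, hvfix⟩ := hQp.nonempty_fixed_point_of_prime_not_dvd_card
    {v : Fin 2 → K // v ≠ 0} hpn2
  have hfix : ∀ T ∈ Q, (T : Matrix (Fin 2) (Fin 2) K).mulVec v = v := by
    intro T hT
    have := hvfix ⟨T, hT⟩
    exact congrArg Subtype.val this
  -- Step 3 : build h with first column v
  have hvcases : v 0 ≠ 0 ∨ v 1 ≠ 0 := by
    by_contra hcon
    push_neg at hcon
    exact hv0 (funext fun i => by fin_cases i <;> simp [hcon.1, hcon.2])
  obtain ⟨w, hw⟩ : ∃ w : Fin 2 → K, v 0 * w 1 - w 0 * v 1 ≠ 0 := by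
    rcases hvcases with h0 | h1
    · exact ⟨Pi.single 1 1, by simpa using h0⟩
    · exact ⟨Pi.single 0 1, by simpa using h1⟩
  set A : Matrix (Fin 2) (Fin 2) K := Matrix.of ![![v 0, w 0], ![v 1, w 1]] with hAdef
  have hdetA : A.det ≠ 0 := by
    rw [Matrix.det_fin_two]
    simpa [hAdef] using hw
  set h : GL (Fin 2) K := ((Matrix.isUnit_iff_isUnit_det A).mpr hdetA.isUnit).unit with hhdef
  have hA : (h : Matrix (Fin 2) (Fin 2) K) = A := IsUnit.unit_spec _
  have hAe1 : (h : Matrix (Fin 2) (Fin 2) K).mulVec (Pi.single 0 1) = v := by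
    rw [hA]
    funext i
    fin_cases i <;> simp [Matrix.mulVec_single, hAdef]
  have hinvv : ((h⁻¹ : GL (Fin 2) K) : Matrix (Fin 2) (Fin 2) K).mulVec v = Pi.single 0 1 := by
    rw [← hAe1, Matrix.mulVec_mulVec, ← Units.val_mul, inv_mul_cancel, Units.val_one,
      Matrix.one_mulVec]
  -- Step 4 : every element of Q has determinant 1
  have hdet1 : ∀ T ∈ Q, (T : Matrix (Fin 2) (Fin 2) K).det = 1 := by
    intro T hT
    obtain ⟨k, hk⟩ := hQpow T hT
    set u : Kˣ := Matrix.GeneralLinearGroup.det T with hudef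
    have h1 : u ^ (p ^ k) = 1 := by rw [hudef, ← map_pow, hk, _root_.map_one]
    have h2 : u ^ (p ^ n - 1) = 1 := by
      have hpc : u ^ (Fintype.card Kˣ) = 1 := pow_card_eq_one
      rwa [Fintype.card_units, hcard] at hpc
    have hcop : Nat.Coprime (p ^ k) (p ^ n - 1) := by
      apply Nat.Coprime.pow_left
      rw [hp.coprime_iff_not_dvd]
      intro hdvd
      have hge : (1:ℕ) ≤ p ^ n := Nat.one_le_pow _ _ hp.pos
      have := Nat.dvd_sub (dvd_pow_self p hn) hdvd
      rw [Nat.sub_sub_self hge] at this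
      exact hp.one_lt.ne' (Nat.dvd_one.mp this)
    have hu1 : u = 1 := by
      have d1 : orderOf u ∣ p ^ k := orderOf_dvd_of_pow_eq_one h1
      have d2 : orderOf u ∣ p ^ n - 1 := orderOf_dvd_of_pow_eq_one h2
      have : orderOf u ∣ 1 := hcop ▸ Nat.dvd_gcd d1 d2
      rw [orderOf_eq_one_iff.mp (Nat.dvd_one.mp this)]
    have := congrArg (Units.val) hu1
    rwa [hudef, Matrix.GeneralLinearGroup.val_det_apply, Units.val_one] at this
  -- Step 5 : conjugates of Q elements by h⁻¹ are E12's
  have hN : ∀ T ∈ Q, h⁻¹ * T * h =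
      E12 (((h⁻¹ * T * h : GL (Fin 2) K) : Matrix (Fin 2) (Fin 2) K) 0 1) := by
    intro T hT
    apply Units.ext
    set N : Matrix (Fin 2) (Fin 2) K := ((h⁻¹ * T * h : GL (Fin 2) K) : Matrix (Fin 2) (Fin 2) K)
      with hNdef
    have hNval : N = ((h⁻¹ : GL (Fin 2) K) : Matrix (Fin 2) (Fin 2) K) *
        (T : Matrix (Fin 2) (Fin 2) K) * (h : Matrix (Fin 2) (Fin 2) K) := by
      rw [hNdef, Units.val_mul, Units.val_mul]
    have hcol : N.mulVec (Pi.single 0 1) = Pi.single 0 1 := by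
      rw [hNval, ← Matrix.mulVec_mulVec, ← Matrix.mulVec_mulVec, hAe1, hfix T hT, hinvv]
    have hN00 : N 0 0 = 1 := by simpa [Matrix.mulVec_single] using congrFun hcol 0
    have hN10 : N 1 0 = 0 := by simpa [Matrix.mulVec_single] using congrFun hcol 1
    have hdetN : N.det = 1 := by
      rw [hNval, Matrix.det_mul, Matrix.det_mul, hdet1 T hT]
      have : ((h⁻¹ : GL (Fin 2) K) : Matrix (Fin 2) (Fin 2) K).det *
          ((h : GL (Fin 2) K) : Matrix (Fin 2) (Fin 2) K).det = 1 := by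
        rw [← Matrix.det_mul, ← Units.val_mul, inv_mul_cancel, Units.val_one, Matrix.det_one]
      linear_combination this
    have hN11 : N 1 1 = 1 := by
      rw [Matrix.det_fin_two, hN00, hN10] at hdetN
      linear_combination hdetN
    show N = _
    rw [E12_val]
    ext i j
    fin_cases i <;> fin_cases j <;> simp [hN00, hN10, hN11]
  -- Step 6 : the family h * E12 c * h⁻¹ lies in G
  have hfam : ∀ c : K, h * E12 c * h⁻¹ ∈ G := by
    set f : ↥Q → K := fun T =>
      ((h⁻¹ * ↑T * h : GL (Fin 2) K) : Matrix (Fin 2) (Fin 2) K) 0 1 with hfdef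
    have hfinj : Function.Injective f := by
      intro T T' he
      have h1 : h⁻¹ * ↑T * h = E12 (f T) := hN ↑T T.2
      have h2 : h⁻¹ * ↑T' * h = E12 (f T') := hN ↑T' T'.2
      rw [he] at h1
      have := h1.trans h2.symm
      have := mul_left_cancel (mul_right_cancel this)
      exact Subtype.ext this
    have hcards : Fintype.card ↥Q = Fintype.card K := by
      refine le_antisymm (Fintype.card_le_of_injective f hfinj) ?_
      rw [hcard]
      apply Nat.le_of_dvd
      · rw [← Nat.card_eq_fintype_card]; exact Nat.card_pos
      · rwa [← Nat.card_eq_fintype_card]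
    have hfsurj : Function.Surjective f :=
      ((Fintype.bijective_iff_injective_and_card f).mpr ⟨hfinj, hcards⟩).2
    intro c
    obtain ⟨T, hT⟩ := hfsurj c
    have : h⁻¹ * ↑T * h = E12 c := by rw [← hT]; exact hN ↑T T.2
    have heq : h * E12 c * h⁻¹ = ↑T := by rw [← this]; group
    rw [heq]
    exact hQle T.2
  -- Step 7 : irreducibility gives g ∈ G moving the line spanned by v
  obtain ⟨g, hgG, hgv⟩ : ∃ g ∈ G, ∀ s : K, s • v ≠ (g : Matrix (Fin 2) (Fin 2) K).mulVec v := by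
    by_contra hcon
    push_neg at hcon
    have hinv : ∀ B ∈ G, ∀ x ∈ Submodule.span K {v},
        (B : Matrix (Fin 2) (Fin 2) K).mulVec x ∈ Submodule.span K {v} := by
      intro B hB x hx
      obtain ⟨s, rfl⟩ := Submodule.mem_span_singleton.mp hx
      obtain ⟨t, ht⟩ := hcon B hB
      rw [Matrix.mulVec_smul, ← ht]
      exact Submodule.smul_mem _ _ (Submodule.smul_mem _ _ (Submodule.mem_span_singleton_self v))
    have hspan : Submodule.span K {v} = ⊤ := by
      rcases hirr (Submodule.span K {v}) hinv with hbot | htop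
      · exfalso
        apply hv0
        have hvmem : v ∈ Submodule.span K {v} := Submodule.mem_span_singleton_self v
        rw [hbot] at hvmem
        simpa using hvmem
      · exact htop
    obtain ⟨s, hs⟩ := Submodule.mem_span_singleton.mp
      (hspan ▸ Submodule.mem_top (x := Pi.single (0 : Fin 2) (1:K)))
    obtain ⟨t, ht⟩ := Submodule.mem_span_singleton.mp
      (hspan ▸ Submodule.mem_top (x := Pi.single (1 : Fin 2) (1:K)))
    have hs0 : s * v 0 = 1 := by simpa using congrFun hs 0
    have hs1 : s * v 1 = 0 := by simpa using congrFun hs 1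
    have ht1 : t * v 1 = 1 := by simpa using congrFun ht 1
    have hsne : s ≠ 0 := fun h0 => by rw [h0, zero_mul] at hs0; exact zero_ne_one hs0
    have hv1 : v 1 = 0 := by
      rcases mul_eq_zero.mp hs1 with h0 | h0
      · exact absurd h0 hsne
      · exact h0
    rw [hv1, mul_zero] at ht1
    exact zero_ne_one ht1
  -- Step 8 : second basis vector v' and the matrix h2
  set v' : Fin 2 → K := (g : Matrix (Fin 2) (Fin 2) K).mulVec v with hv'def
  set B : Matrix (Fin 2) (Fin 2) K := Matrix.of ![![v 0, v' 0], ![v 1, v' 1]] with hBdef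
  have hdetB : B.det ≠ 0 := by
    rw [Matrix.det_fin_two]
    intro h0
    have h0' : v 0 * v' 1 - v' 0 * v 1 = 0 := by simpa [hBdef] using h0
    rcases hvcases with hv00 | hv11
    · apply hgv (v' 0 / v 0)
      funext i
      fin_cases i
      · show (v' 0 / v 0) * v 0 = v' 0
        field_simp
      · show (v' 0 / v 0) * v 1 = v' 1
        field_simp
        linear_combination -h0'
    · apply hgv (v' 1 / v 1)
      funext i
      fin_cases i
      · show (v' 1 / v 1) * v 0 = v' 0
        field_simp
        linear_combination h0'
      · show (v' 1 / v 1) * v 1 = v' 1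
        field_simp
  set h2 : GL (Fin 2) K := ((Matrix.isUnit_iff_isUnit_det B).mpr hdetB.isUnit).unit with hh2def
  have hB : (h2 : Matrix (Fin 2) (Fin 2) K) = B := IsUnit.unit_spec _
  have hBe1 : (h2 : Matrix (Fin 2) (Fin 2) K).mulVec (Pi.single 0 1) = v := by
    rw [hB]
    funext i
    fin_cases i <;> simp [Matrix.mulVec_single, hBdef]
  have hBe2 : (h2 : Matrix (Fin 2) (Fin 2) K).mulVec (Pi.single 1 1) = v' := by
    rw [hB]
    funext i
    fin_cases i <;> simp [Matrix.mulVec_single, hBdef]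
  -- Step 9 : general formula for the action of the family on vectors
  have hTgen : ∀ (a : K) (x : Fin 2 → K),
      ((h * E12 a * h⁻¹ : GL (Fin 2) K) : Matrix (Fin 2) (Fin 2) K).mulVec x
        = x + (a * (((h⁻¹ : GL (Fin 2) K) : Matrix (Fin 2) (Fin 2) K).mulVec x) 1) • v := by
    intro a x
    rw [Units.val_mul, Units.val_mul, ← Matrix.mulVec_mulVec, ← Matrix.mulVec_mulVec]
    set z := ((h⁻¹ : GL (Fin 2) K) : Matrix (Fin 2) (Fin 2) K).mulVec x with hz
    have hE : ((E12 a : GL (Fin 2) K) : Matrix (Fin 2) (Fin 2) K).mulVec z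
        = z + (a * z 1) • (Pi.single 0 1 : Fin 2 → K) := by
      funext i
      fin_cases i <;>
        simp [Matrix.mulVec, dotProduct, Fin.sum_univ_two] <;> ring
    rw [hE, Matrix.mulVec_add, Matrix.mulVec_smul, hAe1]
    congr 1
    rw [hz, Matrix.mulVec_mulVec, ← Units.val_mul, mul_inv_cancel, Units.val_one,
      Matrix.one_mulVec]
  have hTv : ∀ a : K, ((h * E12 a * h⁻¹ : GL (Fin 2) K) : Matrix (Fin 2) (Fin 2) K).mulVec v
      = v := by
    intro a
    rw [hTgen a v, hinvv]
    simp
  -- Step 10 : the E12-family for h2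
  set y : Fin 2 → K := ((h⁻¹ : GL (Fin 2) K) : Matrix (Fin 2) (Fin 2) K).mulVec v' with hydef
  have hhy : (h : Matrix (Fin 2) (Fin 2) K).mulVec y = v' := by
    rw [hydef, Matrix.mulVec_mulVec, ← Units.val_mul, mul_inv_cancel, Units.val_one,
      Matrix.one_mulVec]
  have hcolA : ∀ u : Fin 2 → K, u 1 = 0 →
      (h : Matrix (Fin 2) (Fin 2) K).mulVec u = u 0 • v := by
    intro u hu1
    rw [hA]
    funext i
    fin_cases i <;>
      simp [Matrix.mulVec, dotProduct, Fin.sum_univ_two, hAdef, hu1] <;> ring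
  have hy1 : y 1 ≠ 0 := by
    intro h10
    apply hgv (y 0)
    rw [← hhy, hcolA y h10]
  have hE12e1 : ∀ c : K, ((E12 c : GL (Fin 2) K) : Matrix (Fin 2) (Fin 2) K).mulVec
      (Pi.single 0 1) = Pi.single 0 1 := by
    intro c
    funext i
    fin_cases i <;> simp [Matrix.mulVec_single]
  have hE12e2 : ∀ c : K, ((E12 c : GL (Fin 2) K) : Matrix (Fin 2) (Fin 2) K).mulVec
      (Pi.single 1 1) = (Pi.single 1 1 : Fin 2 → K) + c • (Pi.single 0 1 : Fin 2 → K) := by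
    intro c
    funext i
    fin_cases i <;> simp [Matrix.mulVec_single]
  have hE21e1 : ∀ c : K, ((E21 c : GL (Fin 2) K) : Matrix (Fin 2) (Fin 2) K).mulVec
      (Pi.single 0 1) = (Pi.single 0 1 : Fin 2 → K) + c • (Pi.single 1 1 : Fin 2 → K) := by
    intro c
    funext i
    fin_cases i <;> simp [Matrix.mulVec_single]
  have hE21e2 : ∀ c : K, ((E21 c : GL (Fin 2) K) : Matrix (Fin 2) (Fin 2) K).mulVec
      (Pi.single 1 1) = Pi.single 1 1 := by
    intro c
    funext i
    fin_cases i <;> simp [Matrix.mulVec_single]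
  have hfam2 : ∀ c : K, h2 * E12 c * h2⁻¹ ∈ G := by
    intro c
    set T : GL (Fin 2) K := h * E12 (c / y 1) * h⁻¹ with hTdef
    have hTG : T ∈ G := hfam _
    have hmat : (T : Matrix (Fin 2) (Fin 2) K) * (h2 : Matrix (Fin 2) (Fin 2) K)
        = (h2 : Matrix (Fin 2) (Fin 2) K) * ((E12 c : GL (Fin 2) K) : Matrix (Fin 2) (Fin 2) K) := by
      apply ext2
      · rw [← Matrix.mulVec_mulVec, ← Matrix.mulVec_mulVec, hBe1, hE12e1, hBe1, hTdef, hTv]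
      · rw [← Matrix.mulVec_mulVec, ← Matrix.mulVec_mulVec, hBe2, hE12e2, hTdef, hTgen, ← hydef,
          Matrix.mulVec_add, Matrix.mulVec_smul, hBe2, hBe1, div_mul_cancel₀ c hy1]
    have hunit : T * h2 = h2 * E12 c := Units.ext (by
      rw [Units.val_mul, Units.val_mul]; exact hmat)
    have heq : h2 * E12 c * h2⁻¹ = T := by rw [← hunit]; group
    rw [heq]
    exact hTG
  -- Step 11 : the E21-family for h2
  set z : Fin 2 → K := ((g⁻¹ : GL (Fin 2) K) : Matrix (Fin 2) (Fin 2) K).mulVec v with hzdef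
  have hgz : (g : Matrix (Fin 2) (Fin 2) K).mulVec z = v := by
    rw [hzdef, Matrix.mulVec_mulVec, ← Units.val_mul, mul_inv_cancel, Units.val_one,
      Matrix.one_mulVec]
  have hginv : ((g⁻¹ : GL (Fin 2) K) : Matrix (Fin 2) (Fin 2) K).mulVec v' = v := by
    rw [hv'def, Matrix.mulVec_mulVec, ← Units.val_mul, inv_mul_cancel, Units.val_one,
      Matrix.one_mulVec]
  set y' : Fin 2 → K := ((h⁻¹ : GL (Fin 2) K) : Matrix (Fin 2) (Fin 2) K).mulVec z with hy'def
  have hhy' : (h : Matrix (Fin 2) (Fin 2) K).mulVec y' = z := by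
    rw [hy'def, Matrix.mulVec_mulVec, ← Units.val_mul, mul_inv_cancel, Units.val_one,
      Matrix.one_mulVec]
  have hy'1 : y' 1 ≠ 0 := by
    intro h10
    have hz0 : z = y' 0 • v := by rw [← hhy', hcolA y' h10]
    have hvv : v = y' 0 • v' := by
      rw [← hgz, hz0, Matrix.mulVec_smul, ← hv'def]
    have hy'0 : y' 0 ≠ 0 := by
      intro h00
      rw [h00, zero_smul] at hvv
      exact hv0 hvv
    apply hgv (y' 0)⁻¹
    rw [hvv, smul_smul, inv_mul_cancel₀ hy'0, one_smul]
  have hfam3 : ∀ c : K, h2 * E21 c * h2⁻¹ ∈ G := by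
    intro c
    set T : GL (Fin 2) K := h * E12 (c / y' 1) * h⁻¹ with hTdef
    set S : GL (Fin 2) K := g * T * g⁻¹ with hSdef
    have hSG : S ∈ G := mul_mem (mul_mem hgG (hfam _)) (inv_mem hgG)
    have hSval : (S : Matrix (Fin 2) (Fin 2) K)
        = (g : Matrix (Fin 2) (Fin 2) K) * (T : Matrix (Fin 2) (Fin 2) K) *
          ((g⁻¹ : GL (Fin 2) K) : Matrix (Fin 2) (Fin 2) K) := by
      rw [hSdef, Units.val_mul, Units.val_mul]
    have hSv : (S : Matrix (Fin 2) (Fin 2) K).mulVec v = v + c • v' := by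
      rw [hSval, ← Matrix.mulVec_mulVec, ← Matrix.mulVec_mulVec, ← hzdef, hTdef, hTgen, ← hy'def,
        Matrix.mulVec_add, Matrix.mulVec_smul, hgz, ← hv'def, div_mul_cancel₀ c hy'1]
    have hSv' : (S : Matrix (Fin 2) (Fin 2) K).mulVec v' = v' := by
      rw [hSval, ← Matrix.mulVec_mulVec, ← Matrix.mulVec_mulVec, hginv, hTdef, hTv, ← hv'def]
    have hmat : (S : Matrix (Fin 2) (Fin 2) K) * (h2 : Matrix (Fin 2) (Fin 2) K)
        = (h2 : Matrix (Fin 2) (Fin 2) K) * ((E21 c : GL (Fin 2) K) : Matrix (Fin 2) (Fin 2) K) := by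
      apply ext2
      · rw [← Matrix.mulVec_mulVec, ← Matrix.mulVec_mulVec, hBe1, hE21e1,
          Matrix.mulVec_add, Matrix.mulVec_smul, hBe1, hBe2, hSv]
      · rw [← Matrix.mulVec_mulVec, ← Matrix.mulVec_mulVec, hBe2, hE21e2, hBe2, hSv']
    have hunit : S * h2 = h2 * E21 c := Units.ext (by
      rw [Units.val_mul, Units.val_mul]; exact hmat)
    have heq : h2 * E21 c * h2⁻¹ = S := by rw [← hunit]; group
    rw [heq]
    exact hSG
  -- Step 12 : G contains all determinant-one elements
  have hmemG' : ∀ N : GL (Fin 2) K,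
      N ∈ Subgroup.comap ((MulAut.conj h2).toMonoidHom) G ↔ h2 * N * h2⁻¹ ∈ G := by
    intro N
    rw [Subgroup.mem_comap]
    rfl
  have hSL : ∀ M : GL (Fin 2) K, (M : Matrix (Fin 2) (Fin 2) K).det = 1 → M ∈ G := by
    intro M hM
    have hNdet : ((h2⁻¹ * M * h2 : GL (Fin 2) K) : Matrix (Fin 2) (Fin 2) K).det = 1 := by
      rw [Units.val_mul, Units.val_mul, Matrix.det_mul, Matrix.det_mul, hM]
      have hone : ((h2⁻¹ : GL (Fin 2) K) : Matrix (Fin 2) (Fin 2) K).det *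
          ((h2 : GL (Fin 2) K) : Matrix (Fin 2) (Fin 2) K).det = 1 := by
        rw [← Matrix.det_mul, ← Units.val_mul, inv_mul_cancel, Units.val_one, Matrix.det_one]
      linear_combination hone
    have hNmem : h2⁻¹ * M * h2 ∈ Subgroup.comap ((MulAut.conj h2).toMonoidHom) G :=
      mem_gen _ (fun c => (hmemG' _).mpr (hfam2 c)) (fun c => (hmemG' _).mpr (hfam3 c)) _ hNdet
    have hM' := (hmemG' _).mp hNmem
    have heq : h2 * (h2⁻¹ * M * h2) * h2⁻¹ = M := by group
    rwa [heq] at hM'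
  -- Step 13 : conclude
  rw [Subgroup.eq_top_iff']
  intro Bg
  obtain ⟨Ag, hAgG, hAgdet⟩ := hdet (Matrix.GeneralLinearGroup.det Bg)
  have hdet1' : ((Bg * Ag⁻¹ : GL (Fin 2) K) : Matrix (Fin 2) (Fin 2) K).det = 1 := by
    have hu : Matrix.GeneralLinearGroup.det (Bg * Ag⁻¹ : GL (Fin 2) K) = 1 := by
      rw [_root_.map_mul, map_inv, hAgdet, mul_inv_cancel]
    have := congrArg Units.val hu
    rwa [Matrix.GeneralLinearGroup.val_det_apply, Units.val_one] at this
  have hfin : (Bg * Ag⁻¹) * Ag ∈ G := mul_mem (hSL _ hdet1') hAgG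
  simpa using hfin
end
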